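/- arXiv:2504.06794 — 3 statements merged into one kernel-verified Lean document; each statement's English description precedes it below -/
import Mathlib

section
/- Let θ < κ be infinite regular cardinals with κ uncountable. For every condition ⟨T, f⟩ in the poset S^κ_θ, say of height α+1, there exists a condition ⟨T', f'⟩ ≤ ⟨T, f⟩ in S^κ_θ of height α+2 such that for some τ < τ' < θ one has Δ(f'(α+1)(τ), f'(α+1)(τ')) = α (i.e., the top level of the new ascent path contains two nodes that first disagree exactly at α). -/
noncomputable section

open Ordinal Set

/-- A node of a streamlined tree over `κ` is a function `s : α → κ` for an ordinal `α`;
we code it by its graph, a set of pairs `(ε, v)`. -/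
abbrev PNode : Type 1 := Set (Ordinal × Ordinal)

/-- The set of ordinals in the domain of a coded node. -/
def ndom (s : PNode) : Set Ordinal := {ε | ∃ v, (ε, v) ∈ s}

/-- `s` codes a function from (the ordinals below) `α` to (the ordinals below) `ν`. -/
def IsNodeOf (ν α : Ordinal) (s : PNode) : Prop :=
  (∀ p ∈ s, p.1 < α ∧ p.2 < ν) ∧ ∀ ε, ε < α → ∃! v : Ordinal, (ε, v) ∈ s

/-- The restriction `s ↾ α` of a node. -/
def nrestrict (s : PNode) (α : Ordinal) : PNode := {p ∈ s | p.1 < α}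

/-- The node `s * t`, with domain `dom t`, agreeing with `s` on `dom s` and with `t` elsewhere. -/
def nstar (s t : PNode) : PNode :=
  {p ∈ s | p.1 ∈ ndom t} ∪ {p ∈ t | p.1 ∉ ndom s}

/-- The `α`-th level of a tree. -/
def level (T : Set PNode) (α : Ordinal) : Set PNode := {t ∈ T | ndom t = Set.Iio α}

/-- A streamlined tree: closed under restrictions. -/
def IsStreamlined (T : Set PNode) : Prop := ∀ t ∈ T, ∀ α : Ordinal, nrestrict t α ∈ T

/-- Uniform homogeneity. -/
def UnifHomog (T : Set PNode) : Prop := ∀ s ∈ T, ∀ t ∈ T, nstar s t ∈ T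

/-- Normality for a tree of height `h`. -/
def IsNormalOfHeight (T : Set PNode) (h : Ordinal) : Prop :=
  ∀ x ∈ T, ∀ α, α < h → ∃ y ∈ level T α, x ⊆ y ∨ y ⊆ x

/-- Two nodes are mutually exclusive iff they disagree everywhere on their common domain. -/
def MutExc (s t : PNode) : Prop :=
  ∀ ε v w : Ordinal, (ε, v) ∈ s → (ε, w) ∈ t → v ≠ w

/-- `s =* t` : same domain and agreement on a final segment of the domain. -/
def EqStar (s t : PNode) : Prop :=
  ndom s = ndom t ∧ ∃ α ∈ ndom s, ∀ β, α ≤ β → ∀ v : Ordinal, ((β, v) ∈ s ↔ (β, v) ∈ t)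

/-- `Δ(s,t)`: the least element of `{dom s, dom t} ∪ {δ ∈ dom s ∩ dom t ∣ s(δ) ≠ t(δ)}`. -/
def nDelta (s t : PNode) : Ordinal :=
  sInf ({δ | δ ∉ ndom s} ∪ {δ | δ ∉ ndom t} ∪
    {δ | ∃ v w : Ordinal, (δ, v) ∈ s ∧ (δ, w) ∈ t ∧ v ≠ w})

/-- `supp(f,g)` for two `θ`-sequences of nodes. -/
def supp (θo : Ordinal) (f g : Ordinal → PNode) : Set Ordinal :=
  {τ | τ < θo ∧ (f τ ⊆ g τ ∨ g τ ⊆ f τ)}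

/-- An `α`-branch of `T`. -/
def IsBranch (T : Set PNode) (α : Ordinal) (B : Set PNode) : Prop :=
  B ⊆ T ∧ (∀ x ∈ B, ∀ y ∈ B, x ⊆ y ∨ y ⊆ x) ∧
    {β : Ordinal | ∃ x ∈ B, ndom x = Set.Iio β} = Set.Iio α

/-- The set `V(T)` of vanishing levels of `T`. -/
def VSet (T : Set PNode) : Set Ordinal :=
  {α | Order.IsSuccLimit α ∧ ∀ x ∈ T, (∃ β, β < α ∧ ndom x = Set.Iio β) →
    ∃ B, IsBranch T α B ∧ x ∈ B ∧ ⋃₀ B ∉ T}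

/-- A closed set of ordinals. -/
def OrdClosed (A : Set Ordinal) : Prop :=
  ∀ α : Ordinal, Order.IsSuccLimit α → (∀ β, β < α → (A ∩ Set.Ioo β α).Nonempty) → α ∈ A

/-- A mutually exclusive `F`-ascent path (`F` given via the membership predicate `InF`)
through a tree `T` of height `γ`. -/
def MEAscentPath (θo : Ordinal) (InF : Set Ordinal → Prop) (T : Set PNode) (γ : Ordinal)
    (f : Ordinal → Ordinal → PNode) : Prop :=
  (∀ α, α < γ → ∀ τ, τ < θo → f α τ ∈ level T α) ∧
  (∀ α β, α < β → β < γ → InF (supp θo (f α) (f β))) ∧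
  (∀ α, 0 < α → α < γ → ∀ τ τ', τ < θo → τ' < θo → τ ≠ τ' → MutExc (f α τ) (f α τ'))

/-- A condition: a pair `⟨T, f⟩` together with the ordinal `η` such that `T` has height `η + 1`. -/
structure SCond : Type 1 where
  T : Set PNode
  f : Ordinal.{0} → Ordinal.{0} → PNode
  η : Ordinal.{0}

/-- Membership in the filter generated by the decreasing sequence `X` of length `ζ`. -/
def InFX (ζ : Ordinal) (X : Ordinal → Set Ordinal) (Y : Set Ordinal) : Prop :=
  ∃ ξ, ξ < ζ ∧ X ξ ⊆ Y

/-- `p` is a condition of the forcing `𝕊^κ_𝐗`. -/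
def IsSCondX (κ : Cardinal) (θo : Ordinal) (InF : Set Ordinal → Prop) (p : SCond) : Prop :=
  (∀ t ∈ p.T, ∃ α, α ≤ p.η ∧ IsNodeOf κ.ord α t) ∧
  IsStreamlined p.T ∧
  UnifHomog p.T ∧
  IsNormalOfHeight p.T (p.η + 1) ∧
  (∀ α, α ≤ p.η → (level p.T α).Nonempty) ∧
  (∀ α, α ≤ p.η → Cardinal.mk ↥(level p.T α) < Cardinal.lift.{1} κ) ∧
  MEAscentPath θo InF p.T (p.η + 1) p.f ∧
  OrdClosed (VSet p.T) ∧
  (Order.IsSuccLimit p.η → p.η ∈ VSet p.T) ∧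
  (∀ α, 0 < α → α ≤ p.η → ∀ t ∈ level p.T α, InF {τ | τ < θo ∧ MutExc t (p.f α τ)})

/-- `p ≤ q` in `𝕊^κ_𝐗` (and in `𝕊^κ_θ`): `p` end-extends `q` in both coordinates. -/
def sext (θo : Ordinal) (p q : SCond) : Prop :=
  q.η ≤ p.η ∧
  (∀ t : PNode, t ∈ q.T ↔ (t ∈ p.T ∧ ∃ α, α ≤ q.η ∧ ndom t = Set.Iio α)) ∧
  (∀ α, α ≤ q.η → ∀ τ, τ < θo → p.f α τ = q.f α τ)

/-- Even ordinals (limit ordinals are even). -/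
def EvenOrd (β : Ordinal) : Prop := ∃ γ : Ordinal, β = 2 * γ

/-- Player II has a winning strategy in the game `⅁_μ(P)`: she can choose conditions at all
even (incl. limit) stages `< μ`, only as a function of the previous moves, so that as long as
player I plays legally at odd stages, the resulting `μ`-sequence is decreasing. -/
def WinningStratII {P : Type*} (le : P → P → Prop) (μ : Ordinal) : Prop :=
  ∃ σ : (β : Ordinal) → ({γ : Ordinal // γ < β} → P) → P,
    ∀ g : Ordinal → P,
      (∀ β, β < μ →
        (EvenOrd β → g β = σ β (fun γ => g γ.1)) ∧
        (¬ EvenOrd β → ∀ γ, γ < β → le (g β) (g γ))) →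
      ∀ γ β, γ < β → β < μ → le (g β) (g γ)

/-- `p` is a condition of the vanilla forcing `𝕊^κ_θ`: a normal uniformly homogeneous
tree `T ⊆ ^{<κ}κ` of successor height `η + 1` with all levels of size `< κ`, together with
a `θ`-ascent path (with co-bounded supports). -/
def IsSCondTheta (κ θc : Cardinal) (p : SCond) : Prop :=
  (∀ t ∈ p.T, ∃ α, α ≤ p.η ∧ IsNodeOf κ.ord α t) ∧
  IsStreamlined p.T ∧
  UnifHomog p.T ∧
  IsNormalOfHeight p.T (p.η + 1) ∧
  (∀ α, α ≤ p.η → (level p.T α).Nonempty) ∧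
  (∀ α, α ≤ p.η → Cardinal.mk ↥(level p.T α) < Cardinal.lift.{1} κ) ∧
  (∀ α, α ≤ p.η → ∀ τ, τ < θc.ord → p.f α τ ∈ level p.T α) ∧
  (∀ α β, α < β → β ≤ p.η →
    ∃ τ₀, τ₀ < θc.ord ∧ ∀ τ, τ₀ ≤ τ → τ < θc.ord → τ ∈ supp θc.ord (p.f α) (p.f β))


/-! ### Auxiliary lemmas for `statement0` -/

lemma aux_lt_add_one_iff {a b : Ordinal} : a < b + 1 ↔ a ≤ b := by
  rw [Ordinal.add_one_eq_succ, Order.lt_succ_iff]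

lemma aux_lt_add_one (a : Ordinal) : a < a + 1 := aux_lt_add_one_iff.mpr le_rfl

lemma aux_Iio_inj {a b : Ordinal} (h : Set.Iio a = Set.Iio b) : a = b := by
  by_contra hne
  rcases Ne.lt_or_gt hne with h1 | h1
  · have : a ∈ Set.Iio b := h1
    rw [← h] at this; exact lt_irrefl a this
  · have : b ∈ Set.Iio a := h1
    rw [h] at this; exact lt_irrefl b this

lemma aux_ndom_mono {s t : PNode} (h : s ⊆ t) : ndom s ⊆ ndom t :=
  fun _ ⟨v, hv⟩ => ⟨v, h hv⟩

lemma aux_ndom_isNodeOf {ν α : Ordinal} {t : PNode} (h : IsNodeOf ν α t) :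
    ndom t = Set.Iio α := by
  ext ε
  constructor
  · rintro ⟨v, hv⟩; exact (h.1 _ hv).1
  · intro hε
    obtain ⟨v, hv, -⟩ := h.2 ε hε
    exact ⟨v, hv⟩

lemma aux_node_unique {ν α : Ordinal} {t : PNode} (h : IsNodeOf ν α t) {ε v w : Ordinal}
    (hv : (ε, v) ∈ t) (hw : (ε, w) ∈ t) : v = w := by
  obtain ⟨u, -, hu⟩ := h.2 ε (h.1 _ hv).1
  rw [hu v hv, hu w hw]

lemma aux_node_subset_eq {ν α : Ordinal} {s t : PNode} (ht : IsNodeOf ν α t)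
    (hsub : s ⊆ t) (hdom : ndom s = ndom t) : s = t := by
  apply Set.Subset.antisymm hsub
  rintro ⟨ε, w⟩ hw
  have hε : ε ∈ ndom s := by rw [hdom]; exact ⟨w, hw⟩
  obtain ⟨v, hv⟩ := hε
  have hvw : v = w := aux_node_unique ht (hsub hv) hw
  rw [← hvw]; exact hv

lemma aux_mem_nstar {s t : PNode} {ε v : Ordinal} :
    (ε, v) ∈ nstar s t ↔ ((ε, v) ∈ s ∧ ε ∈ ndom t) ∨ ((ε, v) ∈ t ∧ ε ∉ ndom s) := by
  simp only [nstar, Set.mem_union, Set.mem_setOf_eq]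

lemma aux_ndom_nstar (s t : PNode) : ndom (nstar s t) = ndom t := by
  ext ε
  constructor
  · rintro ⟨v, hv⟩
    rcases aux_mem_nstar.mp hv with ⟨-, hd⟩ | ⟨ht, -⟩
    · exact hd
    · exact ⟨v, ht⟩
  · rintro ⟨v, hv⟩
    by_cases hε : ε ∈ ndom s
    · obtain ⟨w, hw⟩ := hε
      exact ⟨w, aux_mem_nstar.mpr (Or.inl ⟨hw, ⟨v, hv⟩⟩)⟩
    · exact ⟨v, aux_mem_nstar.mpr (Or.inr ⟨hv, hε⟩)⟩

lemma aux_ndom_union (s t : PNode) : ndom (s ∪ t) = ndom s ∪ ndom t := by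
  ext ε
  simp only [ndom, Set.mem_union, Set.mem_setOf_eq]
  constructor
  · rintro ⟨v, hv | hv⟩
    · exact Or.inl ⟨v, hv⟩
    · exact Or.inr ⟨v, hv⟩
  · rintro (⟨v, hv⟩ | ⟨v, hv⟩)
    · exact ⟨v, Or.inl hv⟩
    · exact ⟨v, Or.inr hv⟩

lemma aux_ndom_singleton (η v : Ordinal) : ndom {(η, v)} = {η} := by
  ext ε
  simp only [ndom, Set.mem_singleton_iff, Set.mem_setOf_eq, Prod.ext_iff]
  constructor
  · rintro ⟨w, hw, -⟩; exact hw
  · rintro rfl; exact ⟨v, rfl, rfl⟩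

lemma aux_ndom_new {t' : PNode} {η v : Ordinal} (h : ndom t' = Set.Iio η) :
    ndom (t' ∪ {(η, v)}) = Set.Iio (η + 1) := by
  rw [aux_ndom_union, aux_ndom_singleton, h]
  ext δ
  simp only [Set.mem_union, Set.mem_Iio, Set.mem_singleton_iff, aux_lt_add_one_iff,
    le_iff_lt_or_eq]

lemma aux_nodeOf_new {ν η v : Ordinal} {t' : PNode} (ht' : IsNodeOf ν η t') (hv : v < ν) :
    IsNodeOf ν (η + 1) (t' ∪ {(η, v)}) := by
  constructor
  · rintro p (hp | hp)
    · exact ⟨lt_trans (ht'.1 _ hp).1 (aux_lt_add_one η), (ht'.1 _ hp).2⟩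
    · rw [Set.mem_singleton_iff] at hp
      rw [hp]
      exact ⟨aux_lt_add_one η, hv⟩
  · intro ε hε
    rcases lt_or_ge ε η with hεη | hεη
    · obtain ⟨w, hw, hwu⟩ := ht'.2 ε hεη
      refine ⟨w, Or.inl hw, ?_⟩
      rintro u (hu | hu)
      · exact hwu u hu
      · rw [Set.mem_singleton_iff, Prod.ext_iff] at hu
        exact absurd hu.1 (ne_of_lt hεη)
    · have hεeq : ε = η := le_antisymm (aux_lt_add_one_iff.mp hε) hεη
      subst hεeq
      refine ⟨v, Or.inr rfl, ?_⟩
      rintro u (hu | hu)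
      · exact absurd (ht'.1 _ hu).1 (lt_irrefl ε)
      · rw [Set.mem_singleton_iff, Prod.ext_iff] at hu
        exact hu.2

/-- Homogeneity case: old `s`, new `t`. -/
lemma aux_nstar_old_new {s t' : PNode} {η v : Ordinal}
    (hs : ∀ p ∈ s, Prod.fst p < η) (ht' : ndom t' = Set.Iio η) :
    nstar s (t' ∪ {(η, v)}) = nstar s t' ∪ {(η, v)} := by
  have hηs : η ∉ ndom s := by
    rintro ⟨w, hw⟩
    exact lt_irrefl η (hs _ hw)
  ext ⟨ε, w⟩
  constructor
  · intro h
    rcases aux_mem_nstar.mp h with ⟨hsw, -⟩ | ⟨htw, hns⟩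
    · exact Or.inl (aux_mem_nstar.mpr (Or.inl ⟨hsw, by rw [ht']; exact hs _ hsw⟩))
    · rcases htw with htw | htw
      · exact Or.inl (aux_mem_nstar.mpr (Or.inr ⟨htw, hns⟩))
      · exact Or.inr htw
  · rintro (h | h)
    · rcases aux_mem_nstar.mp h with ⟨hsw, hd⟩ | ⟨htw, hns⟩
      · refine aux_mem_nstar.mpr (Or.inl ⟨hsw, ?_⟩)
        rw [aux_ndom_new ht']
        rw [ht'] at hd
        exact lt_trans hd (aux_lt_add_one η)
      · exact aux_mem_nstar.mpr (Or.inr ⟨Or.inl htw, hns⟩)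
    · refine aux_mem_nstar.mpr (Or.inr ⟨Or.inr h, ?_⟩)
      rw [Set.mem_singleton_iff, Prod.ext_iff] at h
      have h1 : ε = η := h.1
      rw [h1]; exact hηs

/-- Homogeneity case: new `s`, old `t`. -/
lemma aux_nstar_new_old {t' t : PNode} {η v : Ordinal}
    (ht' : ndom t' = Set.Iio η) (ht : ndom t ⊆ Set.Iio η) :
    nstar (t' ∪ {(η, v)}) t = nstar t' t := by
  ext ⟨ε, w⟩
  constructor
  · intro h
    rcases aux_mem_nstar.mp h with ⟨hsw, hd⟩ | ⟨htw, hns⟩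
    · rcases hsw with hsw | hsw
      · exact aux_mem_nstar.mpr (Or.inl ⟨hsw, hd⟩)
      · rw [Set.mem_singleton_iff, Prod.ext_iff] at hsw
        have h1 : ε = η := hsw.1
        rw [h1] at hd
        exact absurd (ht hd) (lt_irrefl η)
    · exfalso
      apply hns
      rw [aux_ndom_new ht']
      exact lt_trans (ht ⟨w, htw⟩) (aux_lt_add_one η)
  · intro h
    rcases aux_mem_nstar.mp h with ⟨hsw, hd⟩ | ⟨htw, hns⟩
    · exact aux_mem_nstar.mpr (Or.inl ⟨Or.inl hsw, hd⟩)
    · exfalso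
      apply hns
      rw [ht']
      exact ht ⟨w, htw⟩

/-- Homogeneity case: new `s`, new `t`. -/
lemma aux_nstar_new_new {s' t' : PNode} {η v w : Ordinal}
    (hs' : ndom s' = Set.Iio η) (ht' : ndom t' = Set.Iio η) :
    nstar (s' ∪ {(η, v)}) (t' ∪ {(η, w)}) = s' ∪ {(η, v)} := by
  have hds : ndom (s' ∪ {(η, v)}) = Set.Iio (η + 1) := aux_ndom_new hs'
  have hdt : ndom (t' ∪ {(η, w)}) = Set.Iio (η + 1) := aux_ndom_new ht'
  ext ⟨ε, u⟩
  constructor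
  · intro h
    rcases aux_mem_nstar.mp h with ⟨hsu, -⟩ | ⟨htu, hns⟩
    · exact hsu
    · exfalso
      apply hns
      rw [hds, ← hdt]
      exact ⟨u, htu⟩
  · intro h
    refine aux_mem_nstar.mpr (Or.inl ⟨h, ?_⟩)
    rw [hdt, ← hds]
    exact ⟨u, h⟩

/-- below every condition of `𝕊^κ_θ`, of height `α + 1` say, there is a
condition of height `α + 2` whose top level of the ascent path contains two nodes that
first disagree exactly at `α`. -/
theorem statement0
    (θ κ : Cardinal) (hθreg : θ.IsRegular) (hκreg : κ.IsRegular) (hθκ : θ < κ)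
    (hκunc : Cardinal.aleph0 < κ)
    (p : SCond) (hp : IsSCondTheta κ θ p) :
    ∃ q : SCond, IsSCondTheta κ θ q ∧ sext θ.ord q p ∧ q.η = p.η + 1 ∧
      ∃ τ τ' : Ordinal, τ < τ' ∧ τ' < θ.ord ∧
        nDelta (q.f (p.η + 1) τ) (q.f (p.η + 1) τ') = p.η := by
  obtain ⟨hp1, hp2, hp3, hp4, hp5, hp6, hp7, hp8⟩ := hp
  set η := p.η with hηdef
  -- basic ordinal facts
  have hθ1 : (1 : Ordinal) < θ.ord := by
    calc (1 : Ordinal) < Ordinal.omega0 := Ordinal.one_lt_omega0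
      _ = Cardinal.aleph0.ord := Cardinal.ord_aleph0.symm
      _ ≤ θ.ord := Cardinal.ord_le_ord.mpr hθreg.aleph0_le
  have hθ0 : (0 : Ordinal) < θ.ord := lt_trans zero_lt_one hθ1
  have hκ1 : (1 : Ordinal) < κ.ord := by
    calc (1 : Ordinal) < Ordinal.omega0 := Ordinal.one_lt_omega0
      _ = Cardinal.aleph0.ord := Cardinal.ord_aleph0.symm
      _ ≤ κ.ord := Cardinal.ord_le_ord.mpr hκreg.aleph0_le
  have hκ0 : (0 : Ordinal) < κ.ord := lt_trans zero_lt_one hκ1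
  -- every member of p.T is a node whose domain is an initial segment, of length ≤ η
  have hmem : ∀ t ∈ p.T, ∃ α, α ≤ η ∧ IsNodeOf κ.ord α t ∧ t ∈ level p.T α := by
    intro t ht
    obtain ⟨α, hα, hnode⟩ := hp1 t ht
    exact ⟨α, hα, hnode, ht, aux_ndom_isNodeOf hnode⟩
  -- nodes in the top level of p.T are nodes of length exactly η
  have hlevnode : ∀ {α : Ordinal}, α ≤ η → ∀ t ∈ level p.T α, IsNodeOf κ.ord α t := by
    intro α hα t ht
    obtain ⟨β, -, hnode, ht', hdom⟩ := hmem t ht.1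
    have : β = α := aux_Iio_inj (by rw [← hdom, ht.2])
    rwa [this] at hnode
  -- the new top level
  set Top : Set PNode :=
    ((fun t' => t' ∪ {(η, 0)}) '' level p.T η) ∪ ((fun t' => t' ∪ {(η, 1)}) '' level p.T η)
    with hTopdef
  have hTopchar : ∀ s ∈ Top, ∃ t' ∈ level p.T η, ∃ v : Ordinal, v < κ.ord ∧
      s = t' ∪ {(η, v)} := by
    rintro s (⟨t', ht', rfl⟩ | ⟨t', ht', rfl⟩)
    · exact ⟨t', ht', 0, hκ0, rfl⟩
    · exact ⟨t', ht', 1, hκ1, rfl⟩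
  have hTopdom : ∀ s ∈ Top, ndom s = Set.Iio (η + 1) := by
    intro s hs
    obtain ⟨t', ht', v, -, rfl⟩ := hTopchar s hs
    exact aux_ndom_new ht'.2
  have hTopnode : ∀ s ∈ Top, IsNodeOf κ.ord (η + 1) s := by
    intro s hs
    obtain ⟨t', ht', v, hv, rfl⟩ := hTopchar s hs
    exact aux_nodeOf_new (hlevnode le_rfl t' ht') hv
  -- the new ascent-path function
  set qf : Ordinal → Ordinal → PNode := fun α τ =>
    if α = η + 1 then (if τ = 0 then p.f η 1 ∪ {(η, 0)} else p.f η τ ∪ {(η, 1)})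
    else p.f α τ with hqfdef
  set q : SCond := ⟨p.T ∪ Top, qf, η + 1⟩ with hqdef
  have hqT : q.T = p.T ∪ Top := rfl
  have hqη : q.η = η + 1 := rfl
  have hqfeq : ∀ α, α ≤ η → ∀ τ, qf α τ = p.f α τ := by
    intro α hα τ
    have : α ≠ η + 1 := ne_of_lt (lt_of_le_of_lt hα (aux_lt_add_one η))
    simp only [hqfdef, if_neg this]
  -- levels below the top are unchanged
  have hlev : ∀ α, α ≤ η → level q.T α = level p.T α := by
    intro α hα
    ext t
    constructor
    · rintro ⟨ht | ht, hdom⟩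
      · exact ⟨ht, hdom⟩
      · exfalso
        have h1 : η + 1 = α := aux_Iio_inj (by rw [← hTopdom t ht, hdom])
        exact absurd (h1 ▸ hα) (not_le_of_gt (aux_lt_add_one η))
    · rintro ⟨ht, hdom⟩
      exact ⟨Set.mem_union_left _ ht, hdom⟩
  -- the top level of q.T is Top
  have hlevtop : level q.T (η + 1) = Top := by
    ext t
    constructor
    · rintro ⟨ht | ht, hdom⟩
      · exfalso
        obtain ⟨α, hα, -, -, hd⟩ := hmem t ht
        have h1 : η + 1 = α := aux_Iio_inj (by rw [← hdom, hd])
        exact absurd (h1 ▸ hα) (not_le_of_gt (aux_lt_add_one η))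
      · exact ht
    · intro ht
      exact ⟨Set.mem_union_right _ ht, hTopdom t ht⟩
  -- membership of the new ascent-path values in Top
  have hqftop : ∀ τ, τ < θ.ord → qf (η + 1) τ ∈ Top := by
    intro τ hτ
    by_cases hτ0 : τ = 0
    · simp only [hqfdef, if_pos rfl, hτ0, if_pos rfl]
      exact Set.mem_union_left _ ⟨p.f η 1, hp7 η le_rfl 1 hθ1, rfl⟩
    · simp only [hqfdef, if_pos rfl, if_neg hτ0]
      exact Set.mem_union_right _ ⟨p.f η τ, hp7 η le_rfl τ hτ, rfl⟩
  -- domains of old nodes are bounded by η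
  have holddom : ∀ t ∈ p.T, ∀ pr ∈ t, Prod.fst pr < η := by
    intro t ht pr hpr
    obtain ⟨α, hα, hnode, -, -⟩ := hmem t ht
    exact lt_of_lt_of_le (hnode.1 _ hpr).1 hα
  refine ⟨q, ?_, ?_, rfl, 0, 1, zero_lt_one, hθ1, ?_⟩
  · -- q is a condition
    refine ⟨?_, ?_, ?_, ?_, ?_, ?_, ?_, ?_⟩
    · -- nodes
      rintro t (ht | ht)
      · obtain ⟨α, hα, hnode⟩ := hp1 t ht
        exact ⟨α, le_trans hα (le_of_lt (aux_lt_add_one η)), hnode⟩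
      · exact ⟨η + 1, le_rfl, hTopnode t ht⟩
    · -- streamlined
      rintro t (ht | ht) α
      · exact Or.inl (hp2 t ht α)
      · obtain ⟨t', ht', v, -, rfl⟩ := hTopchar t ht
        rcases le_or_gt α η with hαη | hαη
        · have : nrestrict (t' ∪ {(η, v)}) α = nrestrict t' α := by
            ext ⟨ε, w⟩
            constructor
            · rintro ⟨hw | hw, hε⟩
              · exact ⟨hw, hε⟩
              · rw [Set.mem_singleton_iff, Prod.ext_iff] at hw
                have h1 : ε = η := hw.1
                rw [h1] at hε
                exact absurd hε (not_lt_of_ge hαη)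
            · rintro ⟨hw, hε⟩
              exact ⟨Or.inl hw, hε⟩
          rw [this]
          exact Set.mem_union_left _ (hp2 t' ht'.1 α)
        · have hrestr : nrestrict (t' ∪ {(η, v)}) α = t' ∪ {(η, v)} := by
            apply Set.Subset.antisymm (fun pr hpr => hpr.1)
            rintro ⟨ε, w⟩ hpr
            refine ⟨hpr, ?_⟩
            have hεη1 : ε < η + 1 := by
              rcases hpr with hpr | hpr
              · have : ε ∈ ndom t' := ⟨w, hpr⟩
                rw [ht'.2] at this
                exact lt_trans this (aux_lt_add_one η)
              · rw [Set.mem_singleton_iff, Prod.ext_iff] at hpr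
                have h1 : ε = η := hpr.1
                rw [h1]
                exact aux_lt_add_one η
            have hsucc : η + 1 ≤ α := by
              rw [Ordinal.add_one_eq_succ]
              exact Order.succ_le_of_lt hαη
            exact lt_of_lt_of_le hεη1 hsucc
          rw [hrestr]
          exact Set.mem_union_right _ ht
    · -- uniformly homogeneous
      rintro s (hs | hs) t (ht | ht)
      · exact Set.mem_union_left _ (hp3 s hs t ht)
      · have hstar : ∀ t'' ∈ level p.T η, nstar s t'' ∈ level p.T η := by
          intro t'' ht''
          refine ⟨hp3 s hs t'' ht''.1, ?_⟩
          rw [aux_ndom_nstar, ht''.2]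
        rcases ht with ⟨t', ht', rfl⟩ | ⟨t', ht', rfl⟩
        · rw [aux_nstar_old_new (holddom s hs) ht'.2]
          exact Set.mem_union_right _
            (Set.mem_union_left _ ⟨nstar s t', hstar t' ht', rfl⟩)
        · rw [aux_nstar_old_new (holddom s hs) ht'.2]
          exact Set.mem_union_right _
            (Set.mem_union_right _ ⟨nstar s t', hstar t' ht', rfl⟩)
      · obtain ⟨s', hs', v, -, rfl⟩ := hTopchar s hs
        have htd : ndom t ⊆ Set.Iio η := by
          intro ε hε
          obtain ⟨w, hw⟩ := hε
          exact holddom t ht _ hw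
        rw [aux_nstar_new_old hs'.2 htd]
        exact Set.mem_union_left _ (hp3 s' hs'.1 t ht)
      · obtain ⟨s', hs', v, -, rfl⟩ := hTopchar s hs
        obtain ⟨t', ht', w, -, rfl⟩ := hTopchar t ht
        rw [aux_nstar_new_new hs'.2 ht'.2]
        exact Set.mem_union_right _ hs
    · -- normal
      intro x hx α hα
      rw [hqη] at hα
      have hα' : α ≤ η + 1 := aux_lt_add_one_iff.mp hα
      rcases lt_or_eq_of_le hα' with hαlt | hαeq
      · -- α ≤ η
        have hαη : α ≤ η := aux_lt_add_one_iff.mp hαlt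
        rw [hlev α hαη]
        rcases hx with hx | hx
        · exact hp4 x hx α (lt_of_le_of_lt hαη (aux_lt_add_one η))
        · obtain ⟨t', ht', v, -, rfl⟩ := hTopchar x hx
          obtain ⟨y, hy, hxy⟩ := hp4 t' ht'.1 α (lt_of_le_of_lt hαη (aux_lt_add_one η))
          refine ⟨y, hy, ?_⟩
          rcases hxy with hxy | hxy
          · -- t' ⊆ y : then y = t' (domains), so y ⊆ x
            have hd : ndom t' ⊆ ndom y := aux_ndom_mono hxy
            rw [ht'.2, hy.2] at hd
            have hηα : η ≤ α := by
              by_contra hcon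
              exact lt_irrefl _ (Set.mem_Iio.mp (hd (lt_of_not_ge hcon)))
            have hαeq' : α = η := le_antisymm hαη hηα
            subst hαeq'
            have : t' = y := aux_node_subset_eq (hlevnode le_rfl y hy) hxy
              (by rw [ht'.2, hy.2])
            right
            rw [← this]
            exact Set.subset_union_left
          · exact Or.inr (Set.Subset.trans hxy Set.subset_union_left)
      · -- α = η + 1
        subst hαeq
        rw [hlevtop]
        rcases hx with hx | hx
        · obtain ⟨t', ht', hxy⟩ := hp4 x hx η (aux_lt_add_one η)
          have hxsub : x ⊆ t' := by
            rcases hxy with hxy | hxy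
            · exact hxy
            · obtain ⟨β, hβ, hnode, -, hdx⟩ := hmem x hx
              have hd : ndom t' ⊆ ndom x := aux_ndom_mono hxy
              rw [ht'.2, hdx] at hd
              have hβη : η ≤ β := by
                by_contra hcon
                exact lt_irrefl _ (Set.mem_Iio.mp (hd (lt_of_not_ge hcon)))
              have hβeq : β = η := le_antisymm hβ hβη
              subst hβeq
              have : t' = x := aux_node_subset_eq hnode hxy (by rw [ht'.2, hdx])
              rw [this]
          exact ⟨t' ∪ {(η, 0)}, Set.mem_union_left _ ⟨t', ht', rfl⟩,
            Or.inl (Set.Subset.trans hxsub Set.subset_union_left)⟩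
        · exact ⟨x, hx, Or.inl (Set.Subset.refl x)⟩
    · -- levels nonempty
      intro α hα
      rw [hqη] at hα
      rcases lt_or_eq_of_le hα with hαlt | hαeq
      · have hαη : α ≤ η := aux_lt_add_one_iff.mp hαlt
        rw [hlev α hαη]
        exact hp5 α hαη
      · subst hαeq
        rw [hlevtop]
        obtain ⟨t', ht'⟩ := hp5 η le_rfl
        exact ⟨t' ∪ {(η, 0)}, Set.mem_union_left _ ⟨t', ht', rfl⟩⟩
    · -- levels small
      intro α hα
      rw [hqη] at hα
      rcases lt_or_eq_of_le hα with hαlt | hαeq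
      · have hαη : α ≤ η := aux_lt_add_one_iff.mp hαlt
        rw [hlev α hαη]
        exact hp6 α hαη
      · subst hαeq
        rw [hlevtop, hTopdef]
        have h0 : Cardinal.mk ↥((fun t' => t' ∪ {(η, (0:Ordinal))}) '' level p.T η)
            < Cardinal.lift.{1} κ :=
          lt_of_le_of_lt Cardinal.mk_image_le (hp6 η le_rfl)
        have h1 : Cardinal.mk ↥((fun t' => t' ∪ {(η, (1:Ordinal))}) '' level p.T η)
            < Cardinal.lift.{1} κ :=
          lt_of_le_of_lt Cardinal.mk_image_le (hp6 η le_rfl)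
        refine lt_of_le_of_lt (Cardinal.mk_union_le _ _) ?_
        exact Cardinal.add_lt_of_lt
          (by rw [← Cardinal.lift_aleph0.{1,0}]; exact Cardinal.lift_le.mpr hκreg.aleph0_le)
          h0 h1
    · -- ascent path: values in levels
      intro α hα τ hτ
      rw [hqη] at hα
      rcases lt_or_eq_of_le hα with hαlt | hαeq
      · have hαη : α ≤ η := aux_lt_add_one_iff.mp hαlt
        show qf α τ ∈ level q.T α
        rw [hqfeq α hαη, hlev α hαη]
        exact hp7 α hαη τ hτ
      · subst hαeq
        show qf (η + 1) τ ∈ level q.T (η + 1)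
        rw [hlevtop]
        exact hqftop τ hτ
    · -- ascent path: supports
      intro α β hαβ hβ
      rw [hqη] at hβ
      rcases lt_or_eq_of_le hβ with hβlt | hβeq
      · have hβη : β ≤ η := aux_lt_add_one_iff.mp hβlt
        obtain ⟨τ₀, hτ₀, hsup⟩ := hp8 α β hαβ hβη
        refine ⟨τ₀, hτ₀, ?_⟩
        intro τ hτ₀τ hτ
        obtain ⟨h1, h2⟩ := hsup τ hτ₀τ hτ
        refine ⟨h1, ?_⟩
        show qf α τ ⊆ qf β τ ∨ qf β τ ⊆ qf α τ
        rw [hqfeq α (le_of_lt (lt_of_lt_of_le hαβ hβη)), hqfeq β hβη]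
        exact h2
      · subst hβeq
        have hαη : α ≤ η := aux_lt_add_one_iff.mp hαβ
        rcases lt_or_eq_of_le hαη with hαlt | hαeq
        · -- α < η
          obtain ⟨τ₀, hτ₀, hsup⟩ := hp8 α η hαlt le_rfl
          refine ⟨max τ₀ 1, max_lt hτ₀ hθ1, ?_⟩
          intro τ hτ₀τ hτ
          have hτ1 : (1 : Ordinal) ≤ τ := le_trans (le_max_right τ₀ 1) hτ₀τ
          have hτne : τ ≠ 0 := by
            intro h
            rw [h] at hτ1
            exact absurd hτ1 (not_le_of_gt zero_lt_one)
          obtain ⟨-, h2⟩ := hsup τ (le_trans (le_max_left τ₀ 1) hτ₀τ) hτ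
          refine ⟨hτ, ?_⟩
          show qf α τ ⊆ qf (η + 1) τ ∨ qf (η + 1) τ ⊆ qf α τ
          rw [hqfeq α (le_of_lt hαlt)]
          have hqfv : qf (η + 1) τ = p.f η τ ∪ {(η, 1)} := by
            simp only [hqfdef, if_pos rfl, if_neg hτne]
          rw [hqfv]
          left
          rcases h2 with h2 | h2
          · exact Set.Subset.trans h2 Set.subset_union_left
          · exfalso
            have hd : ndom (p.f η τ) ⊆ ndom (p.f α τ) := aux_ndom_mono h2
            rw [(hp7 η le_rfl τ hτ).2, (hp7 α (le_of_lt hαlt) τ hτ).2] at hd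
            exact absurd (hd hαlt) (lt_irrefl α)
        · -- α = η
          refine ⟨1, hθ1, ?_⟩
          intro τ hτ1 hτ
          have hτne : τ ≠ 0 := by
            intro h
            rw [h] at hτ1
            exact absurd hτ1 (not_le_of_gt zero_lt_one)
          refine ⟨hτ, ?_⟩
          show qf α τ ⊆ qf (η + 1) τ ∨ qf (η + 1) τ ⊆ qf α τ
          have hqfv : qf (η + 1) τ = p.f η τ ∪ {(η, 1)} := by
            simp only [hqfdef, if_pos rfl, if_neg hτne]
          rw [hqfv, hqfeq α (le_of_eq hαeq), hαeq]
          exact Or.inl Set.subset_union_left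
  · -- sext
    refine ⟨le_of_lt (aux_lt_add_one η), ?_, ?_⟩
    · intro t
      constructor
      · intro ht
        obtain ⟨α, hα, -, -, hd⟩ := hmem t ht
        exact ⟨Set.mem_union_left _ ht, α, hα, hd⟩
      · rintro ⟨ht | ht, α, hα, hd⟩
        · exact ht
        · exfalso
          have h1 : η + 1 = α := aux_Iio_inj (by rw [← hTopdom t ht, hd])
          exact absurd (h1 ▸ hα) (not_le_of_gt (aux_lt_add_one η))
    · intro α hα τ hτ
      exact hqfeq α hα τ
  · -- the Δ computation
    have hb : p.f η 1 ∈ level p.T η := hp7 η le_rfl 1 hθ1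
    have hbnode : IsNodeOf κ.ord η (p.f η 1) := hlevnode le_rfl _ hb
    have hq0 : q.f (η + 1) 0 = p.f η 1 ∪ {(η, 0)} := by
      show qf (η + 1) 0 = _
      simp [hqfdef]
    have hq1 : q.f (η + 1) 1 = p.f η 1 ∪ {(η, 1)} := by
      show qf (η + 1) 1 = _
      simp only [hqfdef, if_pos rfl, if_neg (one_ne_zero (α := Ordinal))]
    rw [hq0, hq1]
    set s : PNode := p.f η 1 ∪ {(η, 0)} with hsdef
    set t : PNode := p.f η 1 ∪ {(η, 1)} with htdef
    have hds : ndom s = Set.Iio (η + 1) := aux_ndom_new hb.2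
    have hdt : ndom t = Set.Iio (η + 1) := aux_ndom_new hb.2
    set S : Set Ordinal := {δ | δ ∉ ndom s} ∪ {δ | δ ∉ ndom t} ∪
      {δ | ∃ v w : Ordinal, (δ, v) ∈ s ∧ (δ, w) ∈ t ∧ v ≠ w} with hSdef
    have hηS : η ∈ S := by
      right
      exact ⟨0, 1, Set.mem_union_right _ rfl, Set.mem_union_right _ rfl, zero_ne_one⟩
    have hlb : ∀ δ ∈ S, η ≤ δ := by
      intro δ hδ
      by_contra hcon
      have hδη : δ < η := lt_of_not_ge hcon
      have hδη1 : δ < η + 1 := lt_trans hδη (aux_lt_add_one η)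
      rcases hδ with (hδ | hδ) | hδ
      · exact hδ (by rw [hds]; exact hδη1)
      · exact hδ (by rw [hdt]; exact hδη1)
      · obtain ⟨v, w, hv, hw, hvw⟩ := hδ
        have hv' : (δ, v) ∈ p.f η 1 := by
          rcases hv with hv | hv
          · exact hv
          · rw [Set.mem_singleton_iff, Prod.ext_iff] at hv
            exact absurd hv.1 (ne_of_lt hδη)
        have hw' : (δ, w) ∈ p.f η 1 := by
          rcases hw with hw | hw
          · exact hw
          · rw [Set.mem_singleton_iff, Prod.ext_iff] at hw
            exact absurd hw.1 (ne_of_lt hδη)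
        exact hvw (aux_node_unique hbnode hv' hw')
    exact le_antisymm (csInf_le' hηS) (le_csInf ⟨η, hηS⟩ hlb)
end
end

section
/- (One-step β-extension.) Let ⟨T, f⟩ ∈ S^κ_X, let β ≤ η_T, and let ν < κ. Then there exists a condition ⟨T', f'⟩ ≤ ⟨T, f⟩ in S^κ_X with η_{T'} = η_T + 1 and ν_{T'} ≥ ν such that: (1) supp(f(β), f(η_T)) ⊆ supp(f(η_T), f'(η_{T'})), and (2) supp(f(β), f'(η_{T'})) = θ. -/
noncomputable section

open Ordinal Set

namespace St2

lemma lt_add_one_of_le {a b : Ordinal} (h : a ≤ b) : a < b + 1 := by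
  rw [Ordinal.add_one_eq_succ]; exact Order.lt_succ_iff.2 h

lemma le_of_lt_add_one {a b : Ordinal} (h : a < b + 1) : a ≤ b := by
  rw [Ordinal.add_one_eq_succ, Order.lt_succ_iff] at h; exact h

lemma add_one_le_of_lt {a b : Ordinal} (h : a < b) : a + 1 ≤ b := by
  rw [Ordinal.add_one_eq_succ]; exact Order.succ_le_of_lt h

lemma ndom_eq {ν α : Ordinal} {s : PNode} (h : IsNodeOf ν α s) : ndom s = Set.Iio α := by
  ext ε
  constructor
  · rintro ⟨v, hv⟩; exact (h.1 _ hv).1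
  · intro hε; obtain ⟨v, hv, -⟩ := h.2 ε hε; exact ⟨v, hv⟩

lemma nval_unique {ν α : Ordinal} {s : PNode} (h : IsNodeOf ν α s) {ε v w : Ordinal}
    (hv : (ε, v) ∈ s) (hw : (ε, w) ∈ s) : v = w := by
  obtain ⟨u, -, hu⟩ := h.2 ε (h.1 _ hv).1
  rw [hu v hv, hu w hw]

lemma ntotal {ν α : Ordinal} {s : PNode} (h : IsNodeOf ν α s) {ε : Ordinal} (hε : ε < α) :
    ∃ v, (ε, v) ∈ s := (h.2 ε hε).exists

lemma sub_of_comparable {ν ν' a b : Ordinal} {s t : PNode} (hs : IsNodeOf ν a s)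
    (ht : IsNodeOf ν' b t) (hab : a ≤ b) (h : s ⊆ t ∨ t ⊆ s) : s ⊆ t := by
  rintro ⟨ε, v⟩ hv
  rcases h with h | h
  · exact h hv
  · have hε : ε < a := (hs.1 _ hv).1
    obtain ⟨w, hw⟩ := ntotal ht (hε.trans_le hab)
    have := nval_unique hs hv (h hw)
    subst this; exact hw

lemma restrict_nodeOf {ν a : Ordinal} {s : PNode} (h : IsNodeOf ν a s) {b : Ordinal}
    (hb : b ≤ a) : IsNodeOf ν b (nrestrict s b) := by
  constructor
  · rintro p ⟨hp, h1⟩; exact ⟨h1, (h.1 p hp).2⟩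
  · intro ε hε
    obtain ⟨v, hv, hu⟩ := h.2 ε (hε.trans_le hb)
    exact ⟨v, ⟨hv, hε⟩, fun w hw => hu w hw.1⟩

lemma restrict_eq_self {ν a : Ordinal} {s : PNode} (h : IsNodeOf ν a s) {b : Ordinal}
    (hb : a ≤ b) : nrestrict s b = s := by
  ext p
  exact ⟨fun hp => hp.1, fun hp => ⟨hp, ((h.1 p hp).1).trans_le hb⟩⟩

lemma mem_nstar {s t : PNode} {p : Ordinal × Ordinal} :
    p ∈ nstar s t ↔ (p ∈ s ∧ p.1 ∈ ndom t) ∨ (p ∈ t ∧ p.1 ∉ ndom s) := Iff.rfl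

lemma nstar_nodeOf {ν a b : Ordinal} {s t : PNode} (hs : IsNodeOf ν a s) (ht : IsNodeOf ν b t)
    (hab : a ≤ b) : IsNodeOf ν b (nstar s t) := by
  constructor
  · rintro p (⟨hp, hd⟩ | ⟨hp, hd⟩)
    · exact ⟨(ndom_eq ht ▸ hd : p.1 ∈ Set.Iio b), (hs.1 p hp).2⟩
    · exact ht.1 p hp
  · intro ε hε
    rcases lt_or_ge ε a with hεa | hεa
    · obtain ⟨v, hv⟩ := ntotal hs hεa
      refine ⟨v, Or.inl ⟨hv, by rw [ndom_eq ht]; exact hεa.trans_le hab⟩, ?_⟩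
      rintro w (⟨hw, -⟩ | ⟨-, hw⟩)
      · exact nval_unique hs hw hv
      · exact absurd (by rw [ndom_eq hs]; exact hεa) hw
    · obtain ⟨v, hv⟩ := ntotal ht hε
      refine ⟨v, Or.inr ⟨hv, by rw [ndom_eq hs]; exact not_lt.2 hεa⟩, ?_⟩
      rintro w (⟨hw, -⟩ | ⟨hw, -⟩)
      · exact absurd ((hs.1 _ hw).1) (not_lt.2 hεa)
      · exact nval_unique ht hw hv

lemma sub_nstar {ν ν' b h a : Ordinal} {s t x : PNode} (hs : IsNodeOf ν b s)
    (ht : IsNodeOf ν h t) (hx : IsNodeOf ν' a x) (hah : a ≤ h)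
    (hc : x ⊆ s ∨ s ⊆ x) (h2 : ∀ ε v : Ordinal, (ε, v) ∈ x → b ≤ ε → (ε, v) ∈ t) :
    x ⊆ nstar s t := by
  rintro ⟨ε, v⟩ hv
  have hεa : ε < a := (hx.1 _ hv).1
  rcases lt_or_ge ε b with hεb | hεb
  · refine Or.inl ⟨?_, by rw [ndom_eq ht]; exact hεa.trans_le hah⟩
    rcases hc with hc | hc
    · exact hc hv
    · obtain ⟨w, hw⟩ := ntotal hs hεb
      have := nval_unique hx hv (hc hw)
      subst this; exact hw
  · exact Or.inr ⟨h2 ε v hv hεb, by rw [ndom_eq hs]; exact not_lt.2 hεb⟩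

lemma nstar_eq_restrict {ν ν' b h : Ordinal} {s t : PNode} (ht : IsNodeOf ν b t)
    (hs : IsNodeOf ν' h s) (hbh : b ≤ h) : nstar s t = nrestrict s b := by
  ext p
  constructor
  · rintro (⟨hp, hd⟩ | ⟨hp, hd⟩)
    · exact ⟨hp, by rwa [ndom_eq ht] at hd⟩
    · exact absurd (by rw [ndom_eq hs]; exact ((ht.1 p hp).1).trans_le hbh) hd
  · rintro ⟨hp, h1⟩
    exact Or.inl ⟨hp, by rw [ndom_eq ht]; exact h1⟩

lemma union_nodeOf {ν η i : Ordinal} {t₀ : PNode} (h : IsNodeOf ν η t₀) (hi : i < ν) :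
    IsNodeOf ν (η + 1) (t₀ ∪ {(η, i)}) := by
  constructor
  · rintro p (hp | hp)
    · exact ⟨((h.1 p hp).1).trans (lt_add_one_of_le le_rfl), (h.1 p hp).2⟩
    · rw [mem_singleton_iff] at hp; subst hp; exact ⟨lt_add_one_of_le le_rfl, hi⟩
  · intro ε hε
    rcases lt_or_ge ε η with hεη | hεη
    · obtain ⟨v, hv, hu⟩ := h.2 ε hεη
      refine ⟨v, Or.inl hv, ?_⟩
      rintro w (hw | hw)
      · exact hu w hw
      · rw [mem_singleton_iff, Prod.mk.injEq] at hw
        exact absurd (hw.1 ▸ hεη) (lt_irrefl η)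
    · have hεη' : ε = η := le_antisymm (le_of_lt_add_one hε) hεη
      subst hεη'
      refine ⟨i, Or.inr rfl, ?_⟩
      rintro w (hw | hw)
      · exact absurd ((h.1 _ hw).1) (lt_irrefl ε)
      · rw [mem_singleton_iff, Prod.mk.injEq] at hw; exact hw.2

lemma ndom_sUnion (B : Set PNode) : ndom (⋃₀ B) = ⋃ x ∈ B, ndom x := by
  ext ε
  simp only [ndom, mem_setOf_eq, mem_sUnion, mem_iUnion]
  constructor
  · rintro ⟨v, x, hx, hv⟩; exact ⟨x, hx, v, hv⟩
  · rintro ⟨x, hx, v, hv⟩; exact ⟨v, x, hx, hv⟩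

end St2

/-- Statement 2 (One-step β-extension), Lemma 3.4 of the paper. -/
theorem statement2
    (θ κ : Cardinal) (hθreg : θ.IsRegular) (hκreg : κ.IsRegular) (hθκ : θ < κ)
    (hpow : ∀ lam : Cardinal, lam < κ → lam ^ θ < κ)
    (ζ : Ordinal) (X : Ordinal → Set Ordinal)
    (hXne : ∀ ξ, ξ < ζ → (X ξ).Nonempty)
    (hXsub : ∀ ξ, ξ < ζ → X ξ ⊆ Set.Iio θ.ord)
    (hXdec : ∀ ξ ξ', ξ ≤ ξ' → ξ' < ζ → X ξ' ⊆ X ξ)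
    (hXco : Cardinal.mk ↥(Set.Iio θ.ord \ X 0) = Cardinal.lift.{1} θ)
    (hXint : (⋂ ξ ∈ Set.Iio ζ, X ξ) = ∅)
    (p : SCond) (hp : IsSCondX κ θ.ord (InFX ζ X) p)
    (β : Ordinal) (hβ : β ≤ p.η) (ν : Cardinal) (hν : ν < κ) :
    ∃ q : SCond, IsSCondX κ θ.ord (InFX ζ X) q ∧ sext θ.ord q p ∧
      q.η = p.η + 1 ∧
      (∃ W : Set PNode, W ⊆ level q.T q.η ∧ (W.Pairwise fun s t => ¬ EqStar s t) ∧
        Cardinal.lift.{1} ν ≤ Cardinal.mk ↥W) ∧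
      supp θ.ord (p.f β) (p.f p.η) ⊆ supp θ.ord (p.f p.η) (q.f q.η) ∧
      supp θ.ord (p.f β) (q.f q.η) = Set.Iio θ.ord := by
  obtain ⟨T, f, η⟩ := p
  dsimp only at hp hβ ⊢
  obtain ⟨hnode, hstream, hhom, hnorm, hlevne, hlevsize, hpath, hclosed, hVlim, hfmut⟩ := hp
  obtain ⟨hlev, hsuppF, hmux⟩ := hpath
  have hζ : 0 < ζ := by
    rcases eq_zero_or_pos ζ with rfl | h
    · exfalso
      have h0 : (0 : Ordinal) ∈ ⋂ ξ ∈ Set.Iio (0 : Ordinal), X ξ :=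
        Set.mem_iInter₂.2 fun ξ hξ => absurd hξ (not_lt_zero (a := ξ))
      rw [hXint] at h0
      exact h0
    · exact h
  have hFmono : ∀ {A B : Set Ordinal}, A ⊆ B → InFX ζ X A → InFX ζ X B := by
    rintro A B hAB ⟨ξ, hξ, h⟩; exact ⟨ξ, hξ, h.trans hAB⟩
  have hFinter : ∀ {A B : Set Ordinal}, InFX ζ X A → InFX ζ X B → InFX ζ X (A ∩ B) := by
    rintro A B ⟨ξ1, h1, s1⟩ ⟨ξ2, h2, s2⟩
    refine ⟨ξ1 ⊔ ξ2, max_lt h1 h2, Set.subset_inter ?_ ?_⟩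
    · exact (hXdec ξ1 (ξ1 ⊔ ξ2) le_sup_left (max_lt h1 h2)).trans s1
    · exact (hXdec ξ2 (ξ1 ⊔ ξ2) le_sup_right (max_lt h1 h2)).trans s2
  have hFtop : InFX ζ X (Set.Iio θ.ord) := ⟨0, hζ, hXsub 0 hζ⟩
  have hlevnode : ∀ {a : Ordinal} {x : PNode}, x ∈ level T a → IsNodeOf κ.ord a x ∧ a ≤ η := by
    rintro a x ⟨hxT, hxd⟩
    obtain ⟨a', ha', hn⟩ := hnode x hxT
    obtain rfl : a' = a := Set.Iio_injective (by rw [← St2.ndom_eq hn, hxd])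
    exact ⟨hn, ha'⟩
  set μ := ν ⊔ θ with hμdef
  have hμκ : μ < κ := max_lt hν hθκ
  have hθμ : θ.ord ≤ μ.ord := Cardinal.ord_le_ord.2 le_sup_right
  have hνμ : ν.ord ≤ μ.ord := Cardinal.ord_le_ord.2 le_sup_left
  have hμκo : μ.ord < κ.ord := Cardinal.ord_lt_ord.2 hμκ
  have hθκo : θ.ord ≤ κ.ord := (Cardinal.ord_lt_ord.2 hθκ).le
  have hμpos : (0 : Ordinal) < μ.ord := by
    have h1 : (0 : Cardinal) < μ :=
      lt_of_lt_of_le Cardinal.aleph0_pos (hθreg.aleph0_le.trans le_sup_right)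
    calc (0 : Ordinal) = (0 : Cardinal).ord := Cardinal.ord_zero.symm
      _ < μ.ord := Cardinal.ord_lt_ord.2 h1
  have hfnode : ∀ a, a ≤ η → ∀ τ, τ < θ.ord → IsNodeOf κ.ord a (f a τ) :=
    fun a ha τ hτ => (hlevnode (hlev a (St2.lt_add_one_of_le ha) τ hτ)).1
  set u : Ordinal → PNode := fun τ => nstar (f β τ) (f η τ) with hu
  set f' : Ordinal → PNode := fun τ => u τ ∪ {(η, τ)} with hf'
  have hunode : ∀ τ, τ < θ.ord → IsNodeOf κ.ord η (u τ) :=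
    fun τ hτ => St2.nstar_nodeOf (hfnode β hβ τ hτ) (hfnode η le_rfl τ hτ) hβ
  have huT : ∀ τ, τ < θ.ord → u τ ∈ level T η := fun τ hτ =>
    ⟨hhom _ (hlev β (St2.lt_add_one_of_le hβ) τ hτ).1 _
      (hlev η (St2.lt_add_one_of_le le_rfl) τ hτ).1, St2.ndom_eq (hunode τ hτ)⟩
  set Top : Set PNode := {x | ∃ t₀ ∈ level T η, ∃ i, i < μ.ord ∧ x = t₀ ∪ {(η, i)}} with hTopdef
  have hTopnode : ∀ x ∈ Top, IsNodeOf κ.ord (η + 1) x := by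
    rintro x ⟨t₀, ht₀, i, hi, rfl⟩
    exact St2.union_nodeOf (hlevnode ht₀).1 (hi.trans hμκo)
  have hne1 : ∀ {a : Ordinal}, a ≤ η → a ≠ η + 1 := by
    intro a ha h
    rw [h] at ha
    exact absurd ha (not_le.2 (St2.lt_add_one_of_le le_rfl))
  have hlevq : ∀ a, a ≤ η → level (T ∪ Top) a = level T a := by
    intro a ha
    ext x
    constructor
    · rintro ⟨hx | hx, hd⟩
      · exact ⟨hx, hd⟩
      · exfalso
        have h1 := St2.ndom_eq (hTopnode x hx)
        rw [hd] at h1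
        exact hne1 ha (Set.Iio_injective h1)
    · rintro ⟨hx, hd⟩; exact ⟨Or.inl hx, hd⟩
  have hlevqtop : level (T ∪ Top) (η + 1) = Top := by
    ext x
    constructor
    · rintro ⟨hx | hx, hd⟩
      · exfalso
        obtain ⟨a, ha, hn⟩ := hnode x hx
        have h1 := St2.ndom_eq hn
        rw [hd] at h1
        exact hne1 ha (Set.Iio_injective h1).symm
      · exact hx
    · intro hx; exact ⟨Or.inr hx, St2.ndom_eq (hTopnode x hx)⟩
  have hres : ∀ (t₀ : PNode) (i a : Ordinal), a ≤ η →
      nrestrict (t₀ ∪ {(η, i)}) a = nrestrict t₀ a := by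
    intro t₀ i a ha
    ext p
    constructor
    · rintro ⟨hp | hp, h1⟩
      · exact ⟨hp, h1⟩
      · rw [Set.mem_singleton_iff] at hp
        subst hp
        exact absurd (h1.trans_le ha) (lt_irrefl η)
    · rintro ⟨hp, h1⟩; exact ⟨Or.inl hp, h1⟩
  have hq1 : ∀ t ∈ T ∪ Top, ∃ a, a ≤ η + 1 ∧ IsNodeOf κ.ord a t := by
    rintro t (ht | ht)
    · obtain ⟨a, ha, hn⟩ := hnode t ht
      exact ⟨a, ha.trans (St2.lt_add_one_of_le le_rfl).le, hn⟩
    · exact ⟨η + 1, le_rfl, hTopnode t ht⟩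
  have hq2 : IsStreamlined (T ∪ Top) := by
    rintro t (ht | ht) a
    · exact Or.inl (hstream t ht a)
    · obtain ⟨t₀, ht₀, i, hi, rfl⟩ := ht
      rcases le_or_gt a η with ha | ha
      · rw [hres t₀ i a ha]
        exact Or.inl (hstream t₀ ht₀.1 a)
      · rw [St2.restrict_eq_self (hTopnode _ ⟨t₀, ht₀, i, hi, rfl⟩) (St2.add_one_le_of_lt ha)]
        exact Or.inr ⟨t₀, ht₀, i, hi, rfl⟩
  have hstar_mixed : ∀ s ∈ T, ∀ x ∈ Top, nstar s x ∈ Top := by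
    rintro s hs x ⟨t₀, ht₀, i, hi, rfl⟩
    obtain ⟨a, ha, hn⟩ := hnode s hs
    have hnt₀ := (hlevnode ht₀).1
    have hnt : IsNodeOf κ.ord (η + 1) (t₀ ∪ {(η, i)}) :=
      St2.union_nodeOf hnt₀ (hi.trans hμκo)
    have hkey : nstar s (t₀ ∪ {(η, i)}) = nstar s t₀ ∪ {(η, i)} := by
      ext p
      constructor
      · rintro (⟨h1, h2⟩ | ⟨h1 | h1, h2⟩)
        · refine Or.inl (Or.inl ⟨h1, ?_⟩)
          rw [St2.ndom_eq hnt₀]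
          exact ((hn.1 p h1).1).trans_le ha
        · exact Or.inl (Or.inr ⟨h1, h2⟩)
        · exact Or.inr h1
      · rintro ((⟨h1, h2⟩ | ⟨h1, h2⟩) | h1)
        · refine Or.inl ⟨h1, ?_⟩
          rw [St2.ndom_eq hnt]
          rw [St2.ndom_eq hnt₀] at h2
          exact h2.trans (St2.lt_add_one_of_le le_rfl)
        · exact Or.inr ⟨Or.inl h1, h2⟩
        · rw [Set.mem_singleton_iff] at h1
          subst h1
          refine Or.inr ⟨Or.inr rfl, ?_⟩
          rw [St2.ndom_eq hn]
          exact not_lt.2 ha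
    rw [hkey]
    exact ⟨nstar s t₀, ⟨hhom s hs t₀ ht₀.1, St2.ndom_eq (St2.nstar_nodeOf hn hnt₀ ha)⟩, i, hi, rfl⟩
  have hq3 : UnifHomog (T ∪ Top) := by
    rintro s (hs | hs) t (ht | ht)
    · exact Or.inl (hhom s hs t ht)
    · exact Or.inr (hstar_mixed s hs t ht)
    · obtain ⟨b, hb, hnt⟩ := hnode t ht
      rw [St2.nstar_eq_restrict hnt (hTopnode s hs) (hb.trans (St2.lt_add_one_of_le le_rfl).le)]
      exact hq2 s (Or.inr hs) b
    · rw [St2.nstar_eq_restrict (hTopnode t ht) (hTopnode s hs) le_rfl,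
        St2.restrict_eq_self (hTopnode s hs) le_rfl]
      exact Or.inr hs
  have hq4 : IsNormalOfHeight (T ∪ Top) (η + 1 + 1) := by
    rintro x hx a ha
    rcases eq_or_lt_of_le (St2.le_of_lt_add_one ha) with rfl | ha'
    · rcases hx with hx | hx
      · obtain ⟨y₀, hy₀, hcomp⟩ := hnorm x hx η (St2.lt_add_one_of_le le_rfl)
        obtain ⟨ax, hax, hnx⟩ := hnode x hx
        refine ⟨y₀ ∪ {(η, 0)}, ?_, Or.inl ?_⟩
        · rw [hlevqtop]
          exact ⟨y₀, hy₀, 0, hμpos, rfl⟩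
        · exact (St2.sub_of_comparable hnx (hlevnode hy₀).1 hax hcomp).trans
            Set.subset_union_left
      · refine ⟨x, ?_, Or.inl Set.Subset.rfl⟩
        rw [hlevqtop]; exact hx
    · have ha2 : a ≤ η := St2.le_of_lt_add_one ha'
      rcases hx with hx | hx
      · obtain ⟨y, hy, hc⟩ := hnorm x hx a ha'
        refine ⟨y, ?_, hc⟩
        rw [hlevq a ha2]; exact hy
      · refine ⟨nrestrict x a, ?_, Or.inr (fun p hp => hp.1)⟩
        rw [hlevq a ha2]
        obtain ⟨t₀, ht₀, i, hi, rfl⟩ := hx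
        rw [hres t₀ i a ha2]
        exact ⟨hstream t₀ ht₀.1 a, St2.ndom_eq (St2.restrict_nodeOf (hlevnode ht₀).1 ha2)⟩
  have hq5 : ∀ a, a ≤ η + 1 → (level (T ∪ Top) a).Nonempty := by
    intro a ha
    rcases eq_or_lt_of_le ha with rfl | ha
    · obtain ⟨t₀, ht₀⟩ := hlevne η le_rfl
      exact ⟨t₀ ∪ {(η, 0)}, by rw [hlevqtop]; exact ⟨t₀, ht₀, 0, hμpos, rfl⟩⟩
    · rw [hlevq a (St2.le_of_lt_add_one ha)]
      exact hlevne a (St2.le_of_lt_add_one ha)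
  have hq6 : ∀ a, a ≤ η + 1 → Cardinal.mk ↥(level (T ∪ Top) a) < Cardinal.lift.{1} κ := by
    intro a ha
    rcases eq_or_lt_of_le ha with rfl | ha
    · rw [hlevqtop]
      have hsurj : Function.Surjective
          (fun z : ↥(level T η) × ↥(Set.Iio μ.ord) =>
            (⟨z.1.1 ∪ {(η, z.2.1)}, z.1.1, z.1.2, z.2.1, z.2.2, rfl⟩ : Top)) := by
        rintro ⟨x, t₀, ht₀, i, hi, rfl⟩
        exact ⟨⟨⟨t₀, ht₀⟩, ⟨i, hi⟩⟩, rfl⟩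
      have h1 : Cardinal.mk ↥Top ≤ Cardinal.mk (↥(level T η) × ↥(Set.Iio μ.ord)) :=
        Cardinal.mk_le_of_surjective hsurj
      have h2 : Cardinal.mk (↥(level T η) × ↥(Set.Iio μ.ord))
          = Cardinal.mk ↥(level T η) * Cardinal.mk ↥(Set.Iio μ.ord) := by
        simp [Cardinal.mk_prod]
      have h3 : Cardinal.mk ↥(Set.Iio μ.ord) = Cardinal.lift.{1} μ := by
        rw [Ordinal.mk_Iio_ordinal, Cardinal.card_ord]
      refine lt_of_le_of_lt h1 ?_
      rw [h2, h3]
      exact Cardinal.mul_lt_of_lt (by simpa using hκreg.aleph0_le) (hlevsize η le_rfl)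
        (Cardinal.lift_lt.2 hμκ)
    · rw [hlevq a (St2.le_of_lt_add_one ha)]
      exact hlevsize a (St2.le_of_lt_add_one ha)
  set qf : Ordinal → Ordinal → PNode := fun a => if a = η + 1 then f' else f a with hqf
  have hsupp_self : ∀ g : Ordinal → PNode, Set.Iio θ.ord ⊆ supp θ.ord g g :=
    fun g τ hτ => ⟨hτ, Or.inl Set.Subset.rfl⟩
  have hsupp_comm : ∀ g h : Ordinal → PNode, supp θ.ord g h ⊆ supp θ.ord h g := by
    rintro g h τ ⟨h1, h2⟩
    exact ⟨h1, h2.symm⟩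
  have hS : ∀ a, a ≤ η → ∀ c, c ≤ η → InFX ζ X (supp θ.ord (f a) (f c)) := by
    intro a ha c hc
    rcases lt_trichotomy a c with h | rfl | h
    · exact hsuppF a c h (St2.lt_add_one_of_le hc)
    · exact hFmono (hsupp_self (f a)) hFtop
    · exact hFmono (hsupp_comm (f c) (f a)) (hsuppF c a h (St2.lt_add_one_of_le ha))
  have hkeysub : ∀ a, a ≤ η → ∀ τ, τ ∈ supp θ.ord (f a) (f β) →
      τ ∈ supp θ.ord (f a) (f η) → f a τ ⊆ f' τ := by
    rintro a ha τ ⟨hτ, hcβ⟩ ⟨-, hcη⟩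
    have na := hfnode a ha τ hτ
    have nβ := hfnode β hβ τ hτ
    have nη := hfnode η le_rfl τ hτ
    have hsub : f a τ ⊆ f η τ := St2.sub_of_comparable na nη ha hcη
    show f a τ ⊆ u τ ∪ {(η, τ)}
    exact (St2.sub_nstar nβ nη na ha hcβ (fun ε v h _ => hsub h)).trans Set.subset_union_left
  have hq7 : MEAscentPath θ.ord (InFX ζ X) (T ∪ Top) (η + 1 + 1) qf := by
    refine ⟨?_, ?_, ?_⟩
    · intro a ha τ hτ
      rcases eq_or_lt_of_le (St2.le_of_lt_add_one ha) with rfl | ha'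
      · simp only [hqf]
        rw [hlevqtop]
        exact ⟨u τ, huT τ hτ, τ, hτ.trans_le hθμ, rfl⟩
      · have ha2 : a ≤ η := St2.le_of_lt_add_one ha'
        simp only [hqf]
        rw [if_neg (hne1 ha2), hlevq a ha2]
        exact hlev a ha' τ hτ
    · intro a b hab hb
      rcases eq_or_lt_of_le (St2.le_of_lt_add_one hb) with rfl | hb'
      · have ha2 : a ≤ η := St2.le_of_lt_add_one hab
        have hsub : supp θ.ord (f a) (f β) ∩ supp θ.ord (f a) (f η)
            ⊆ supp θ.ord (qf a) (qf (η + 1)) := by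
          rintro τ ⟨h1, h2⟩
          have h3 := hkeysub a ha2 τ h1 h2
          refine ⟨h1.1, Or.inl ?_⟩
          simp only [hqf]
          rw [if_neg (hne1 ha2)]
          exact h3
        exact hFmono hsub (hFinter (hS a ha2 β hβ) (hS a ha2 η le_rfl))
      · have hb2 : b ≤ η := St2.le_of_lt_add_one hb'
        have heq : supp θ.ord (f a) (f b) ⊆ supp θ.ord (qf a) (qf b) := by
          simp only [hqf]
          rw [if_neg (hne1 hb2), if_neg (hne1 ((hab.le).trans hb2))]
        exact hFmono heq (hsuppF a b hab (St2.lt_add_one_of_le hb2))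
    · intro a ha0 ha τ τ' hτ hτ' hττ'
      rcases eq_or_lt_of_le (St2.le_of_lt_add_one ha) with rfl | ha'
      · simp only [hqf]
        rintro ε v w hv hw
        have nβτ := hfnode β hβ τ hτ
        have nβτ' := hfnode β hβ τ' hτ'
        rcases hw with hw | hw
        · have hεη : ε < η := ((hunode τ' hτ').1 _ hw).1
          rcases hv with hv | hv
          swap
          · rw [Set.mem_singleton_iff, Prod.mk.injEq] at hv
            exact absurd (hv.1 ▸ hεη) (lt_irrefl η)
          rcases hv with ⟨hv1, -⟩ | ⟨hv1, hv2⟩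
          · have hεβ : ε < β := (nβτ.1 _ hv1).1
            rcases hw with ⟨hw1, -⟩ | ⟨hw1, hw2⟩
            · exact hmux β (lt_of_le_of_lt (zero_le (a := ε)) hεβ) (St2.lt_add_one_of_le hβ)
                τ τ' hτ hτ' hττ' ε v w hv1 hw1
            · exact absurd (by rw [St2.ndom_eq nβτ']; exact hεβ) hw2
          · rcases hw with ⟨hw1, -⟩ | ⟨hw1, -⟩
            · exact absurd (by rw [St2.ndom_eq nβτ]; exact (nβτ'.1 _ hw1).1) hv2
            · exact hmux η (lt_of_le_of_lt (zero_le (a := ε)) hεη)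
                (St2.lt_add_one_of_le le_rfl) τ τ' hτ hτ' hττ' ε v w hv1 hw1
        · rw [Set.mem_singleton_iff, Prod.mk.injEq] at hw
          obtain ⟨rfl, rfl⟩ := hw
          rcases hv with hv | hv
          · exact absurd (((hunode τ hτ).1 _ hv).1) (lt_irrefl ε)
          · rw [Set.mem_singleton_iff, Prod.mk.injEq] at hv
            obtain ⟨-, rfl⟩ := hv
            exact hττ'
      · have ha2 : a ≤ η := St2.le_of_lt_add_one ha'
        simp only [hqf]
        rw [if_neg (hne1 ha2)]
        exact hmux a ha0 ha' τ τ' hτ hτ' hττ'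
  have hVeq : VSet (T ∪ Top) = VSet T := by
    ext a
    by_cases hal : Order.IsSuccLimit a
    swap
    · exact ⟨fun h => absurd h.1 hal, fun h => absurd h.1 hal⟩
    rcases le_or_gt a η with ha | ha
    · constructor
      · rintro ⟨-, h⟩
        refine ⟨hal, ?_⟩
        intro x hx hxd
        obtain ⟨B, ⟨hBq, hchain, hdom⟩, hxB, hUB⟩ := h x (Or.inl hx) hxd
        have hBT : B ⊆ T := by
          intro y hy
          rcases hBq hy with hyT | hyT
          · exact hyT
          · exfalso
            have hmem : η + 1 ∈ Set.Iio a := by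
              rw [← hdom]
              exact ⟨y, hy, St2.ndom_eq (hTopnode y hyT)⟩
            exact absurd ((St2.lt_add_one_of_le le_rfl).trans (lt_of_lt_of_le hmem ha))
              (lt_irrefl η)
        exact ⟨B, ⟨hBT, hchain, hdom⟩, hxB, fun hU => hUB (Or.inl hU)⟩
      · rintro ⟨-, h⟩
        refine ⟨hal, ?_⟩
        rintro x hx hxd
        obtain ⟨b, hb, hxdb⟩ := hxd
        have hxT : x ∈ T := by
          rcases hx with hx | hx
          · exact hx
          · exfalso
            have h1 := St2.ndom_eq (hTopnode x hx)
            rw [hxdb] at h1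
            obtain rfl := Set.Iio_injective h1
            exact absurd (hb.trans_le ha) (not_lt.2 (St2.lt_add_one_of_le le_rfl).le)
        obtain ⟨B, ⟨hBT, hchain, hdom⟩, hxB, hUB⟩ := h x hxT ⟨b, hb, hxdb⟩
        refine ⟨B, ⟨hBT.trans Set.subset_union_left, hchain, hdom⟩, hxB, ?_⟩
        rintro (hU | hU)
        · exact hUB hU
        · have hndomB : ndom (⋃₀ B) = Set.Iio a := by
            rw [St2.ndom_sUnion]
            ext ε
            simp only [Set.mem_iUnion, Set.mem_Iio]
            constructor
            · rintro ⟨y, hy, hε⟩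
              obtain ⟨cy, hcy, hny⟩ := hnode y (hBT hy)
              have hcy2 : cy ∈ Set.Iio a := by
                rw [← hdom]; exact ⟨y, hy, St2.ndom_eq hny⟩
              rw [St2.ndom_eq hny] at hε
              exact hε.trans hcy2
            · intro hε
              have hε1 : ε + 1 ∈ Set.Iio a := by
                rw [Ordinal.add_one_eq_succ]
                exact hal.succ_lt hε
              rw [← hdom] at hε1
              obtain ⟨y, hy, hyd⟩ := hε1
              exact ⟨y, hy, by rw [hyd]; exact St2.lt_add_one_of_le le_rfl⟩
          have h1 := St2.ndom_eq (hTopnode _ hU)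
          rw [hndomB] at h1
          obtain rfl := Set.Iio_injective h1
          exact absurd ha (not_le.2 (St2.lt_add_one_of_le le_rfl))
    · have hnomem : ∀ (T' : Set PNode) (c : Ordinal), c < a →
          (∀ y ∈ T', ndom y ≠ Set.Iio c) →
          (∃ x₀ ∈ T', ∃ b, b < a ∧ ndom x₀ = Set.Iio b) → a ∉ VSet T' := by
        rintro T' c hc hnone ⟨x₀, hx₀, b, hb, hx₀d⟩ ⟨-, h⟩
        obtain ⟨B, ⟨hBT, hchain, hdom⟩, -, -⟩ := h x₀ hx₀ ⟨b, hb, hx₀d⟩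
        have hc2 : c ∈ Set.Iio a := hc
        rw [← hdom] at hc2
        obtain ⟨y, hy, hyd⟩ := hc2
        exact hnone y (hBT hy) hyd
      have ha1 : η + 1 < a := by rw [Ordinal.add_one_eq_succ]; exact hal.succ_lt ha
      obtain ⟨x₀, hx₀⟩ := hlevne 0 (zero_le (a := η))
      have hfalse1 : a ∉ VSet T := by
        refine hnomem T (η + 1) ha1 ?_ ⟨x₀, hx₀.1, 0, hal.pos, hx₀.2⟩
        intro y hy he
        obtain ⟨ay, hay, hny⟩ := hnode y hy
        have h1 := St2.ndom_eq hny
        rw [he] at h1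
        exact hne1 hay (Set.Iio_injective h1).symm
      have hfalse2 : a ∉ VSet (T ∪ Top) := by
        have ha2 : η + 1 + 1 < a := by
          rw [Ordinal.add_one_eq_succ (η + 1)]; exact hal.succ_lt ha1
        refine hnomem (T ∪ Top) (η + 1 + 1) ha2 ?_ ⟨x₀, Or.inl hx₀.1, 0, hal.pos, hx₀.2⟩
        rintro y (hy | hy) he
        · obtain ⟨ay, hay, hny⟩ := hnode y hy
          have h1 := St2.ndom_eq hny
          rw [he] at h1
          obtain rfl := (Set.Iio_injective h1).symm
          exact absurd hay (not_le.2
            ((St2.lt_add_one_of_le le_rfl).trans (St2.lt_add_one_of_le le_rfl)))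
        · have h1 := St2.ndom_eq (hTopnode y hy)
          rw [he] at h1
          exact absurd (Set.Iio_injective h1).symm (ne_of_lt (St2.lt_add_one_of_le le_rfl))
      exact ⟨fun h => absurd h hfalse2, fun h => absurd h hfalse1⟩
  have hq8 : OrdClosed (VSet (T ∪ Top)) := by rw [hVeq]; exact hclosed
  have hq9 : Order.IsSuccLimit (η + 1) → (η + 1) ∈ VSet (T ∪ Top) := fun h =>
    absurd h (by rw [Ordinal.add_one_eq_succ]; exact Order.not_isSuccLimit_succ η)
  have hq10 : ∀ a, 0 < a → a ≤ η + 1 → ∀ t ∈ level (T ∪ Top) a,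
      InFX ζ X {τ | τ < θ.ord ∧ MutExc t (qf a τ)} := by
    intro a ha0 ha t ht
    rcases eq_or_lt_of_le ha with rfl | ha'
    · rw [hlevqtop] at ht
      obtain ⟨t₀, ht₀, i, hi, rfl⟩ := ht
      have hnt₀ := (hlevnode ht₀).1
      have hS1 : InFX ζ X {τ | τ < θ.ord ∧ MutExc t₀ (f η τ)} := by
        rcases eq_zero_or_pos η with hη0 | hηpos
        · refine hFmono (fun τ hτ => ⟨hτ, ?_⟩) hFtop
          intro ε v w hv hw
          exact absurd ((hnt₀.1 _ hv).1) (by rw [hη0]; exact not_lt_zero (a := ε))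
        · exact hfmut η hηpos le_rfl t₀ ht₀
      have hS2 : InFX ζ X {τ | τ < θ.ord ∧ MutExc (nrestrict t₀ β) (f β τ)} := by
        rcases eq_zero_or_pos β with hβ0 | hβpos
        · refine hFmono (fun τ hτ => ⟨hτ, ?_⟩) hFtop
          rintro ε v w ⟨hv, hv1⟩ hw
          exact absurd hv1 (by rw [hβ0]; exact not_lt_zero (a := ε))
        · exact hfmut β hβpos hβ (nrestrict t₀ β)
            ⟨hstream t₀ ht₀.1 β, St2.ndom_eq (St2.restrict_nodeOf hnt₀ hβ)⟩
      have hS3 : InFX ζ X {τ | τ ≠ i} := by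
        have hex : ∃ ξ, ξ < ζ ∧ i ∉ X ξ := by
          by_contra hcon
          push_neg at hcon
          have hmem : i ∈ ⋂ ξ ∈ Set.Iio ζ, X ξ := Set.mem_iInter₂.2 fun ξ hξ => hcon ξ hξ
          rw [hXint] at hmem
          exact hmem
        obtain ⟨ξ3, hξ3, hiX⟩ := hex
        exact ⟨ξ3, hξ3, fun τ hτ he => hiX (he ▸ hτ)⟩
      refine hFmono ?_ (hFinter (hFinter hS1 hS2) hS3)
      rintro τ ⟨⟨⟨hτθ, hm1⟩, ⟨-, hm2⟩⟩, hτi⟩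
      refine ⟨hτθ, ?_⟩
      simp only [hqf]
      rintro ε v w hv hw
      have nβτ := hfnode β hβ τ hτθ
      rcases hw with hw | hw
      · rcases hv with hv | hv
        swap
        · rw [Set.mem_singleton_iff, Prod.mk.injEq] at hv
          obtain ⟨rfl, rfl⟩ := hv
          exact absurd (((hunode τ hτθ).1 _ hw).1) (lt_irrefl ε)
        rcases hw with ⟨hw1, -⟩ | ⟨hw1, -⟩
        · have hεβ : ε < β := (nβτ.1 _ hw1).1
          exact hm2 ε v w ⟨hv, hεβ⟩ hw1
        · exact hm1 ε v w hv hw1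
      · rw [Set.mem_singleton_iff, Prod.mk.injEq] at hw
        obtain ⟨rfl, rfl⟩ := hw
        rcases hv with hv | hv
        · exact absurd ((hnt₀.1 _ hv).1) (lt_irrefl ε)
        · rw [Set.mem_singleton_iff, Prod.mk.injEq] at hv
          obtain ⟨-, rfl⟩ := hv
          exact fun he => hτi he.symm
    · have ha2 : a ≤ η := St2.le_of_lt_add_one ha'
      rw [hlevq a ha2] at ht
      refine hFmono ?_ (hfmut a ha0 ha2 t ht)
      rintro τ ⟨h1, h2⟩
      refine ⟨h1, ?_⟩
      simp only [hqf]
      rw [if_neg (hne1 ha2)]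
      exact h2
  have hsext2 : ∀ t : PNode, t ∈ T ↔ (t ∈ T ∪ Top ∧ ∃ a, a ≤ η ∧ ndom t = Set.Iio a) := by
    intro t
    constructor
    · intro ht
      obtain ⟨a, ha, hn⟩ := hnode t ht
      exact ⟨Or.inl ht, a, ha, St2.ndom_eq hn⟩
    · rintro ⟨ht | ht, a, ha, hd⟩
      · exact ht
      · exfalso
        have h1 := St2.ndom_eq (hTopnode t ht)
        rw [hd] at h1
        exact hne1 ha (Set.Iio_injective h1)
  have hsext3 : ∀ a, a ≤ η → ∀ τ, τ < θ.ord → qf a τ = f a τ := by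
    intro a ha τ hτ
    simp only [hqf]
    rw [if_neg (hne1 ha)]
  obtain ⟨t₀w, ht₀w⟩ := hlevne η le_rfl
  have hnt₀w := (hlevnode ht₀w).1
  have hWsub : {x : PNode | ∃ i, i < ν.ord ∧ x = t₀w ∪ {(η, i)}}
      ⊆ level (T ∪ Top) (η + 1) := by
    rintro x ⟨i, hi, rfl⟩
    rw [hlevqtop]
    exact ⟨t₀w, ht₀w, i, hi.trans_le hνμ, rfl⟩
  have hWpair : {x : PNode | ∃ i, i < ν.ord ∧ x = t₀w ∪ {(η, i)}}.Pairwise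
      fun s t => ¬ EqStar s t := by
    rintro x ⟨i, hi, rfl⟩ y ⟨j, hj, rfl⟩ hxy ⟨hdom, a, haW, hfin⟩
    have hun : IsNodeOf κ.ord (η + 1) (t₀w ∪ {(η, i)}) :=
      St2.union_nodeOf hnt₀w ((hi.trans_le hνμ).trans hμκo)
    have haη : a ≤ η := by
      have h2 : a ∈ Set.Iio (η + 1) := by rw [← St2.ndom_eq hun]; exact haW
      exact St2.le_of_lt_add_one h2
    have h1 : (η, i) ∈ t₀w ∪ {(η, j)} := (hfin η haη i).1 (Or.inr rfl)
    rcases h1 with h1 | h1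
    · exact absurd ((hnt₀w.1 _ h1).1) (lt_irrefl η)
    · rw [Set.mem_singleton_iff, Prod.mk.injEq] at h1
      exact hxy (by rw [h1.2])
  have hWcard : Cardinal.lift.{1} ν
      ≤ Cardinal.mk ↥{x : PNode | ∃ i, i < ν.ord ∧ x = t₀w ∪ {(η, i)}} := by
    have hinj : Function.Injective (fun i : ↥(Set.Iio ν.ord) =>
        (⟨t₀w ∪ {(η, i.1)}, i.1, i.2, rfl⟩ :
          ↥{x : PNode | ∃ i, i < ν.ord ∧ x = t₀w ∪ {(η, i)}})) := by
      rintro ⟨i, hi⟩ ⟨j, hj⟩ he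
      simp only [Subtype.mk.injEq] at he ⊢
      have h1 : (η, i) ∈ t₀w ∪ {(η, j)} := by rw [← he]; exact Or.inr rfl
      rcases h1 with h1 | h1
      · exact absurd ((hnt₀w.1 _ h1).1) (lt_irrefl η)
      · rw [Set.mem_singleton_iff, Prod.mk.injEq] at h1
        exact h1.2
    calc Cardinal.lift.{1} ν = Cardinal.mk ↥(Set.Iio ν.ord) := by
          rw [Ordinal.mk_Iio_ordinal, Cardinal.card_ord]
      _ ≤ _ := Cardinal.mk_le_of_injective hinj
  have hfin1 : supp θ.ord (f β) (f η) ⊆ supp θ.ord (f η) (qf (η + 1)) := by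
    rintro τ ⟨hτ, hc⟩
    refine ⟨hτ, Or.inl ?_⟩
    simp only [hqf]
    have nβτ := hfnode β hβ τ hτ
    have nητ := hfnode η le_rfl τ hτ
    have hsub : f β τ ⊆ f η τ := St2.sub_of_comparable nβτ nητ hβ hc
    show f η τ ⊆ u τ ∪ {(η, τ)}
    exact (St2.sub_nstar nβτ nητ nητ le_rfl (Or.inr hsub) (fun ε v h _ => h)).trans
      Set.subset_union_left
  have hfin2 : supp θ.ord (f β) (qf (η + 1)) = Set.Iio θ.ord := by
    ext τ
    constructor
    · rintro ⟨hτ, -⟩; exact hτ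
    · intro hτ
      refine ⟨hτ, Or.inl ?_⟩
      simp only [hqf]
      have nβτ := hfnode β hβ τ hτ
      have nητ := hfnode η le_rfl τ hτ
      show f β τ ⊆ u τ ∪ {(η, τ)}
      refine (St2.sub_nstar nβτ nητ nβτ hβ (Or.inl Set.Subset.rfl) ?_).trans
        Set.subset_union_left
      intro ε v h hβε
      exact absurd ((nβτ.1 _ h).1) (not_lt.2 hβε)
  exact ⟨⟨T ∪ Top, qf, η + 1⟩,
    ⟨hq1, hq2, hq3, hq4, hq5, hq6, hq7, hq8, hq9, hq10⟩,
    ⟨(St2.lt_add_one_of_le le_rfl).le, hsext2, hsext3⟩,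
    rfl,
    ⟨{x : PNode | ∃ i, i < ν.ord ∧ x = t₀w ∪ {(η, i)}}, hWsub, hWpair, hWcard⟩,
    hfin1, hfin2⟩
end
end

section
/- (Limit extension.) Suppose Γ is a cofinal subset of some limit ordinal γ < κ, δ ∈ (γ, κ), and ⟨(T^β, f^β, z^β) : β ∈ Γ⟩ is a sequence such that: ⟨⟨T^β, f^β⟩ : β ∈ Γ⟩ is a decreasing sequence of conditions in S^κ_X; for every β ∈ Γ, z^β : (β, δ) → T^β, where for every i with β < i < δ: z^β(i) belongs to the top level of T^β, z^β(i) is not =*-equivalent to z^β(i') for every i' ∈ (β, δ)∖{i}, z^β(i) is not =*-equivalent to f^β(η_{T^β})(0), and z^β(i) and f^β(η_{T^β})(τ) are mutually exclusive for every nonzero τ < θ; and for all α, β ∈ Γ: supp(f^α(η_{T^α}), f^β(η_{T^β})) = θ, and z^α(i) ⊆ z^β(i) whenever α < β < i < δ. Then there exist a condition ⟨T^γ, f^γ⟩ in S^κ_X and a function z^γ : (γ, δ) → T^γ such that: η_{T^γ} = sup{η_{T^β} : β ∈ Γ}; z^γ(i) = ⋃{z^β(i) : β ∈ Γ} for every i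 with γ < i < δ; for every β ∈ Γ, ⟨T^γ, f^γ⟩ ≤ ⟨T^β, f^β⟩ and supp(f^β(η_{T^β}), f^γ(η_{T^γ})) = θ; and a function y : η_{T^γ} → κ belongs to T^γ iff either y = x * f^γ(η_{T^γ})(τ) for some x ∈ ⋃{T^β : β ∈ Γ} and τ < θ, or y = x * z^γ(i) for some x ∈ ⋃{T^β : β ∈ Γ} and i ∈ (γ, δ). -/
noncomputable section

open Ordinal Set

namespace SAux3

open Set

lemma mem_ndom {s : PNode} {ε : Ordinal} : ε ∈ ndom s ↔ ∃ v, (ε, v) ∈ s := Iff.rfl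

lemma fst_mem_ndom {s : PNode} {q : Ordinal × Ordinal} (h : q ∈ s) : q.1 ∈ ndom s :=
  ⟨q.2, h⟩

lemma mem_nstar {s t : PNode} {q : Ordinal × Ordinal} :
    q ∈ nstar s t ↔ (q ∈ s ∧ q.1 ∈ ndom t) ∨ (q ∈ t ∧ q.1 ∉ ndom s) := by
  simp [nstar, Set.mem_union, Set.mem_setOf_eq]

lemma mem_nrestrict {s : PNode} {α : Ordinal} {q : Ordinal × Ordinal} :
    q ∈ nrestrict s α ↔ q ∈ s ∧ q.1 < α := Iff.rfl

lemma ndom_nstar (s t : PNode) : ndom (nstar s t) = ndom t := by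
  ext ε
  constructor
  · rintro ⟨v, hv⟩
    rcases mem_nstar.1 hv with ⟨_, h⟩ | ⟨h, _⟩
    · exact h
    · exact ⟨v, h⟩
  · rintro ⟨v, hv⟩
    by_cases hε : ε ∈ ndom s
    · obtain ⟨u, hu⟩ := hε
      exact ⟨u, mem_nstar.2 (Or.inl ⟨hu, ⟨v, hv⟩⟩)⟩
    · exact ⟨v, mem_nstar.2 (Or.inr ⟨hv, hε⟩)⟩

lemma ndom_nrestrict (s : PNode) (α : Ordinal) :
    ndom (nrestrict s α) = ndom s ∩ Iio α := by
  ext ε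
  constructor
  · rintro ⟨v, hv, hlt⟩
    exact ⟨⟨v, hv⟩, hlt⟩
  · rintro ⟨⟨v, hv⟩, hlt⟩
    exact ⟨v, hv, hlt⟩

lemma nrestrict_eq_self {s : PNode} {α : Ordinal} (h : ∀ q ∈ s, Prod.fst q < α) :
    nrestrict s α = s := by
  ext q
  exact ⟨fun hq => hq.1, fun hq => ⟨hq, h q hq⟩⟩

lemma nrestrict_nrestrict {s : PNode} {a c : Ordinal} (h : a ≤ c) :
    nrestrict (nrestrict s c) a = nrestrict s a := by
  ext q
  constructor
  · rintro ⟨⟨hq, _⟩, ha⟩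
    exact ⟨hq, ha⟩
  · rintro ⟨hq, ha⟩
    exact ⟨⟨hq, ha.trans_le h⟩, ha⟩

lemma ndom_empty : ndom (∅ : PNode) = ∅ := by
  ext ε
  simp [ndom]

lemma nstar_empty (t : PNode) : nstar ∅ t = t := by
  ext q
  rw [mem_nstar]
  simp [ndom_empty]

lemma Iio_inj {a b : Ordinal} (h : Set.Iio a = Set.Iio b) : a = b := by
  by_contra hne
  rcases lt_or_gt_of_ne hne with hlt | hlt
  · have h1 : a ∈ Set.Iio b := hlt
    rw [← h] at h1
    exact absurd h1 (lt_irrefl a)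
  · have h1 : b ∈ Set.Iio a := hlt
    rw [h] at h1
    exact absurd h1 (lt_irrefl b)

lemma nodeOf_ndom_eq {ν α : Ordinal} {s : PNode} (h : IsNodeOf ν α s) :
    ndom s = Set.Iio α := by
  ext ε
  constructor
  · rintro ⟨v, hv⟩
    exact (h.1 _ hv).1
  · intro hε
    obtain ⟨v, hv, -⟩ := h.2 ε hε
    exact ⟨v, hv⟩

lemma node_level_eq {ν α a : Ordinal} {s : PNode} (h : IsNodeOf ν α s)
    (hd : ndom s = Set.Iio a) : α = a :=
  Iio_inj ((nodeOf_ndom_eq h) ▸ hd)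

/-- If `s ⊆ t` are nodes of the same level, they are equal. -/
lemma node_eq_of_subset {ν a : Ordinal} {s t : PNode} (hs : IsNodeOf ν a s)
    (ht : IsNodeOf ν a t) (h : s ⊆ t) : s = t := by
  refine Set.Subset.antisymm h ?_
  intro q hq
  obtain ⟨v, hv, huniq⟩ := hs.2 q.1 (ht.1 q hq).1
  have hvt : (q.1, v) ∈ t := h hv
  obtain ⟨u, hu, huniqt⟩ := ht.2 q.1 (ht.1 q hq).1
  have h1 : v = u := huniqt _ hvt
  have h2 : q.2 = u := huniqt _ (by rw [← Prod.mk.eta (p := q)]; exact hq)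
  have : (q.1, q.2) ∈ s := by rw [h2, ← h1]; exact hv
  rwa [Prod.mk.eta] at this

/-- Comparable nodes: the one of lower level is contained in the other. -/
lemma node_subset_of_le {ν a c : Ordinal} {s t : PNode} (hs : IsNodeOf ν a s)
    (ht : IsNodeOf ν c t) (hac : a ≤ c) (h : s ⊆ t ∨ t ⊆ s) : s ⊆ t := by
  rcases h with h | h
  · exact h
  · have hca : c ≤ a := by
      by_contra hlt
      push_neg at hlt
      obtain ⟨v, hv, -⟩ := ht.2 a hlt
      exact absurd (hs.1 _ (h hv)).1 (lt_irrefl a)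
    have : a = c := le_antisymm hac hca
    subst this
    exact (node_eq_of_subset ht hs h).symm ▸ Set.Subset.rfl

lemma nstar_eq_of_ndom_subset {s t : PNode} (h : ndom t ⊆ ndom s) :
    nstar s t = {q ∈ s | q.1 ∈ ndom t} := by
  ext q
  rw [mem_nstar]
  constructor
  · rintro (hq | ⟨hq, hns⟩)
    · exact hq
    · exact absurd (h (fst_mem_ndom hq)) hns
  · exact fun hq => Or.inl hq

lemma nstar_self {s t : PNode} (h : ndom s = ndom t) : nstar s t = s := by
  rw [nstar_eq_of_ndom_subset h.ge]
  ext q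
  exact ⟨fun hq => hq.1, fun hq => ⟨hq, h ▸ fst_mem_ndom hq⟩⟩

lemma nstar_eq_nrestrict {s t : PNode} {a : Ordinal} (hd : ndom t = Set.Iio a)
    (h : ndom t ⊆ ndom s) : nstar s t = nrestrict s a := by
  rw [nstar_eq_of_ndom_subset h]
  ext q
  constructor
  · rintro ⟨hq, hq2⟩
    rw [hd] at hq2
    exact ⟨hq, hq2⟩
  · rintro ⟨hq, hq2⟩
    refine ⟨hq, ?_⟩
    rw [hd]
    exact hq2

lemma subset_nstar {s t : PNode} (h : ndom s ⊆ ndom t) : s ⊆ nstar s t :=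
  fun q hq => mem_nstar.2 (Or.inl ⟨hq, h (fst_mem_ndom hq)⟩)

lemma nstar_mono_right {s t t' : PNode} (h : t ⊆ t') (hd : ndom t ⊆ ndom t') :
    nstar s t ⊆ nstar s t' := by
  intro q hq
  rcases mem_nstar.1 hq with ⟨hq, hdq⟩ | ⟨hq, hns⟩
  · exact mem_nstar.2 (Or.inl ⟨hq, hd hdq⟩)
  · exact mem_nstar.2 (Or.inr ⟨h hq, hns⟩)

lemma nrestrict_nstar (s t : PNode) (α : Ordinal) :
    nrestrict (nstar s t) α = nstar s (nrestrict t α) := by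
  ext q
  rw [mem_nrestrict, mem_nstar, mem_nstar, ndom_nrestrict]
  constructor
  · rintro ⟨hq | hq, hα⟩
    · exact Or.inl ⟨hq.1, hq.2, hα⟩
    · exact Or.inr ⟨⟨hq.1, hα⟩, hq.2⟩
  · rintro (⟨hq, hdq, hα⟩ | ⟨⟨hq, hα⟩, hns⟩)
    · exact ⟨Or.inl ⟨hq, hdq⟩, hα⟩
    · exact ⟨Or.inr ⟨hq, hns⟩, hα⟩

lemma nstar_nrestrict_left {s t : PNode} {α : Ordinal} (h : ndom t ⊆ Set.Iio α) :
    nstar (nrestrict s α) t = nstar s t := by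
  ext q
  rw [mem_nstar, mem_nstar, ndom_nrestrict]
  constructor
  · rintro (⟨⟨hq, _⟩, hdq⟩ | ⟨hq, hns⟩)
    · exact Or.inl ⟨hq, hdq⟩
    · refine Or.inr ⟨hq, fun hmem => hns ⟨hmem, h (fst_mem_ndom hq)⟩⟩
  · rintro (⟨hq, hdq⟩ | ⟨hq, hns⟩)
    · exact Or.inl ⟨⟨hq, h hdq⟩, hdq⟩
    · exact Or.inr ⟨hq, fun hmem => hns hmem.1⟩

lemma nodeOf_nstar {ν a c : Ordinal} {x b : PNode} (hx : IsNodeOf ν a x)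
    (hb : IsNodeOf ν c b) (hac : a ≤ c) : IsNodeOf ν c (nstar x b) := by
  constructor
  · intro q hq
    rcases mem_nstar.1 hq with ⟨hq, -⟩ | ⟨hq, -⟩
    · exact ⟨(hx.1 q hq).1.trans_le hac, (hx.1 q hq).2⟩
    · exact hb.1 q hq
  · intro ε hε
    by_cases hεx : ε ∈ ndom x
    · obtain ⟨v, hv⟩ := hεx
      refine ⟨v, mem_nstar.2 (Or.inl ⟨hv, (nodeOf_ndom_eq hb) ▸ hε⟩), ?_⟩
      intro u hu
      rcases mem_nstar.1 hu with ⟨hu, -⟩ | ⟨-, hns⟩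
      · obtain ⟨v', -, huniq⟩ := hx.2 ε (hx.1 _ hv).1
        rw [huniq u hu, huniq v hv]
      · exact absurd ⟨v, hv⟩ hns
    · obtain ⟨v, hv, huniq⟩ := hb.2 ε hε
      refine ⟨v, mem_nstar.2 (Or.inr ⟨hv, hεx⟩), ?_⟩
      intro u hu
      rcases mem_nstar.1 hu with ⟨hu, -⟩ | ⟨hu, -⟩
      · exact absurd ⟨u, hu⟩ hεx
      · exact huniq u hu

/-- Key rewriting: `x * b = (x * (b ↾ α)) * b` when `dom x ⊆ α ⊆ dom b`,
derived from the general associativity-type lemma. -/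
lemma nstar_nstar {s x b : PNode} {α : Ordinal} (hs : ∀ q ∈ s, Prod.fst q < α)
    (hx : ∀ q ∈ x, Prod.fst q < α) :
    nstar s (nstar x b) = nstar (nstar s (nstar x (nrestrict b α))) b := by
  ext q
  have h1 : q ∈ b → q.1 ∈ ndom b := fun h => fst_mem_ndom h
  have h2 : q.1 ∈ ndom x → q.1 < α := by rintro ⟨v, hv⟩; exact hx (q.1, v) hv
  have h3 : q.1 ∈ ndom s → q.1 < α := by rintro ⟨v, hv⟩; exact hs (q.1, v) hv
  simp only [mem_nstar, mem_nrestrict, ndom_nstar, ndom_nrestrict,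
    Set.mem_inter_iff, Set.mem_Iio]
  constructor
  · rintro (⟨hqs, hDb⟩ | ⟨(⟨hqx, hDb⟩ | ⟨hqb, hnx⟩), hns⟩)
    · exact Or.inl ⟨Or.inl ⟨hqs, hDb, hs _ hqs⟩, hDb⟩
    · exact Or.inl ⟨Or.inr ⟨Or.inl ⟨hqx, hDb, hx _ hqx⟩, hns⟩, hDb⟩
    · by_cases hA : q.1 < α
      · exact Or.inl ⟨Or.inr ⟨Or.inr ⟨⟨hqb, hA⟩, hnx⟩, hns⟩, h1 hqb⟩
      · exact Or.inr ⟨hqb, fun h => hA h.2⟩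
  · rintro (⟨(⟨hqs, hDb, -⟩ | ⟨(⟨hqx, hDb, -⟩ | ⟨⟨hqb, -⟩, hnx⟩), hns⟩), -⟩ | ⟨hqb, hn⟩)
    · exact Or.inl ⟨hqs, hDb⟩
    · exact Or.inr ⟨Or.inl ⟨hqx, hDb⟩, hns⟩
    · exact Or.inr ⟨Or.inr ⟨hqb, hnx⟩, hns⟩
    · have hα : ¬ q.1 < α := fun a => hn ⟨h1 hqb, a⟩
      exact Or.inr ⟨Or.inr ⟨hqb, fun d => hα (h2 d)⟩, fun d => hα (h3 d)⟩

lemma nstar_normalize {x b : PNode} {α : Ordinal} (hx : ∀ q ∈ x, Prod.fst q < α) :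
    nstar x b = nstar (nstar x (nrestrict b α)) b := by
  have := nstar_nstar (s := (∅ : PNode)) (x := x) (b := b) (α := α)
    (by intro q hq; exact absurd hq (Set.notMem_empty q)) hx
  rwa [nstar_empty, nstar_empty] at this

end SAux3

open SAux3 in
/-- Statement 3 (Limit extension), Lemma 3.5 of the paper. -/
theorem statement3
    (θ κ : Cardinal) (hθreg : θ.IsRegular) (hκreg : κ.IsRegular) (hθκ : θ < κ)
    (hpow : ∀ lam : Cardinal, lam < κ → lam ^ θ < κ)
    (ζ : Ordinal) (X : Ordinal → Set Ordinal)
    (hXne : ∀ ξ, ξ < ζ → (X ξ).Nonempty)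
    (hXsub : ∀ ξ, ξ < ζ → X ξ ⊆ Set.Iio θ.ord)
    (hXdec : ∀ ξ ξ', ξ ≤ ξ' → ξ' < ζ → X ξ' ⊆ X ξ)
    (hXco : Cardinal.mk ↥(Set.Iio θ.ord \ X 0) = Cardinal.lift.{1} θ)
    (hXint : (⋂ ξ ∈ Set.Iio ζ, X ξ) = ∅)
    (γ : Ordinal) (hγlim : Order.IsSuccLimit γ) (hγκ : γ < κ.ord)
    (δ : Ordinal) (hγδ : γ < δ) (hδκ : δ < κ.ord)
    (Γ : Set Ordinal) (hΓsub : Γ ⊆ Set.Iio γ)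
    (hΓcof : ∀ β, β < γ → ∃ β' ∈ Γ, β ≤ β')
    (p : Ordinal → SCond) (z : Ordinal → Ordinal → PNode)
    -- `⟨⟨T^β, f^β⟩ : β ∈ Γ⟩` is a decreasing sequence of conditions in `𝕊^κ_𝐗`:
    (hcond : ∀ β ∈ Γ, IsSCondX κ θ.ord (InFX ζ X) (p β))
    (hdec : ∀ α ∈ Γ, ∀ β ∈ Γ, α ≤ β → sext θ.ord (p β) (p α))
    -- the properties of `z^β : (β, δ) → T^β`:
    (hztop : ∀ β ∈ Γ, ∀ i, β < i → i < δ → z β i ∈ level (p β).T (p β).η)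
    (hzdist : ∀ β ∈ Γ, ∀ i, β < i → i < δ → ∀ i', β < i' → i' < δ → i' ≠ i →
      ¬ EqStar (z β i) (z β i'))
    (hzf0 : ∀ β ∈ Γ, ∀ i, β < i → i < δ → ¬ EqStar (z β i) ((p β).f (p β).η 0))
    (hzme : ∀ β ∈ Γ, ∀ i, β < i → i < δ → ∀ τ, 0 < τ → τ < θ.ord →
      MutExc (z β i) ((p β).f (p β).η τ))
    -- the coherence properties over pairs from `Γ`:
    (hsupp : ∀ α ∈ Γ, ∀ β ∈ Γ,
      supp θ.ord ((p α).f (p α).η) ((p β).f (p β).η) = Set.Iio θ.ord)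
    (hzmono : ∀ α ∈ Γ, ∀ β ∈ Γ, ∀ i, α < β → β < i → i < δ → z α i ⊆ z β i) :
    ∃ q : SCond, ∃ zg : Ordinal → PNode,
      IsSCondX κ θ.ord (InFX ζ X) q ∧
      q.η = sSup ((fun β => (p β).η) '' Γ) ∧
      (∀ i, γ < i → i < δ → (zg i = ⋃ β ∈ Γ, z β i) ∧ zg i ∈ q.T) ∧
      (∀ β ∈ Γ, sext θ.ord q (p β) ∧
        supp θ.ord ((p β).f (p β).η) (q.f q.η) = Set.Iio θ.ord) ∧
      (∀ y : PNode, IsNodeOf κ.ord q.η y →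
        (y ∈ q.T ↔
          ∃ x, (∃ β ∈ Γ, x ∈ (p β).T) ∧
            ((∃ τ, τ < θ.ord ∧ y = nstar x (q.f q.η τ)) ∨
             (∃ i, γ < i ∧ i < δ ∧ y = nstar x (zg i))))) := by
  classical
  have hθ0 : 0 < θ.ord := by
    have := Cardinal.ord_lt_ord.2 hθreg.pos
    rwa [Cardinal.ord_zero] at this
  have hζ0 : 0 < ζ := by
    rcases eq_zero_or_pos ζ with h | h
    · exfalso
      have h0 : (0:Ordinal) ∈ ⋂ ξ ∈ Set.Iio ζ, X ξ := by
        subst h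
        refine Set.mem_iInter₂.2 ?_
        intro ξ hξ
        exact absurd hξ (not_lt_of_ge (zero_le : (0:Ordinal) ≤ ξ))
      rw [hXint] at h0
      exact h0
    · exact h
  -- monotonicity facts for the filter
  have hInFmono : ∀ {Y Y' : Set Ordinal}, InFX ζ X Y → Y ⊆ Y' → InFX ζ X Y' := by
    rintro Y Y' ⟨ξ, hξ, hY⟩ hYY
    exact ⟨ξ, hξ, hY.trans hYY⟩
  have hInFinter : ∀ {Y Y' : Set Ordinal}, InFX ζ X Y → InFX ζ X Y' → InFX ζ X (Y ∩ Y') := by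
    rintro Y Y' ⟨ξ, hξ, hY⟩ ⟨ξ', hξ', hY'⟩
    rcases le_total ξ ξ' with h | h
    · exact ⟨ξ', hξ', fun x hx => ⟨hY (hXdec ξ ξ' h hξ' hx), hY' hx⟩⟩
    · exact ⟨ξ, hξ, fun x hx => ⟨hY hx, hY' (hXdec ξ' ξ h hξ hx)⟩⟩
  have hInFIio : InFX ζ X (Set.Iio θ.ord) := ⟨0, hζ0, hXsub 0 hζ0⟩
  have hInFne : ∀ τ0 : Ordinal, InFX ζ X {τ | τ < θ.ord ∧ τ ≠ τ0} := by
    intro τ0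
    have : τ0 ∉ ⋂ ξ ∈ Set.Iio ζ, X ξ := by rw [hXint]; exact Set.notMem_empty τ0
    simp only [Set.mem_iInter, Set.mem_Iio, not_forall] at this
    obtain ⟨ξ, hξ, hτ0⟩ := this
    exact ⟨ξ, hξ, fun x hx => ⟨hXsub ξ hξ hx, fun h => hτ0 (h ▸ hx)⟩⟩
  have hΓne : Γ.Nonempty := by
    obtain ⟨β, hβ, -⟩ := hΓcof 0 hγlim.pos
    exact ⟨β, hβ⟩
  have hle1 : ∀ a c : Ordinal, a ≤ c → a < c + 1 := by
    intro a c h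
    exact lt_of_le_of_lt h (lt_add_one c)
  -- structural facts about the given conditions
  have hnode : ∀ β ∈ Γ, ∀ t ∈ (p β).T,
      ∃ a, a ≤ (p β).η ∧ ndom t = Set.Iio a ∧ IsNodeOf κ.ord a t := by
    intro β hβ t ht
    obtain ⟨a, ha, hn⟩ := (hcond β hβ).1 t ht
    exact ⟨a, ha, nodeOf_ndom_eq hn, hn⟩
  have hlevnode : ∀ β ∈ Γ, ∀ a : Ordinal, ∀ t ∈ level (p β).T a, IsNodeOf κ.ord a t := by
    intro β hβ a t ht
    obtain ⟨a', -, hd, hn⟩ := hnode β hβ t ht.1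
    rwa [node_level_eq hn ht.2] at hn
  have hTsub : ∀ β ∈ Γ, ∀ β' ∈ Γ, β ≤ β' → (p β).T ⊆ (p β').T := by
    intro β hβ β' hβ' h t ht
    exact (((hdec β hβ β' hβ' h).2.1 t).1 ht).1
  have hmemT : ∀ β ∈ Γ, ∀ β' ∈ Γ, ∀ t ∈ (p β').T, ∀ a : Ordinal,
      ndom t = Set.Iio a → a ≤ (p β).η → t ∈ (p β).T := by
    intro β hβ β' hβ' t ht a hd ha
    rcases le_total β' β with h | h
    · exact hTsub β' hβ' β hβ h ht
    · exact ((hdec β hβ β' hβ' h).2.1 t).2 ⟨ht, a, ha, hd⟩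
  have hfeq : ∀ β ∈ Γ, ∀ β' ∈ Γ, ∀ a : Ordinal, a ≤ (p β).η → a ≤ (p β').η →
      ∀ τ, τ < θ.ord → (p β).f a τ = (p β').f a τ := by
    intro β hβ β' hβ' a ha ha' τ hτ
    rcases le_total β β' with h | h
    · exact ((hdec β hβ β' hβ' h).2.2 a ha τ hτ).symm
    · exact (hdec β' hβ' β hβ h).2.2 a ha' τ hτ
  have hflev : ∀ β ∈ Γ, ∀ a : Ordinal, a ≤ (p β).η → ∀ τ, τ < θ.ord →
      (p β).f a τ ∈ level (p β).T a := by
    intro β hβ a ha τ hτ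
    exact (hcond β hβ).2.2.2.2.2.2.1.1 a (hle1 _ _ ha) τ hτ
  have hfnode : ∀ β ∈ Γ, ∀ a : Ordinal, a ≤ (p β).η → ∀ τ, τ < θ.ord →
      IsNodeOf κ.ord a ((p β).f a τ) := by
    intro β hβ a ha τ hτ
    exact hlevnode β hβ a _ (hflev β hβ a ha τ hτ)
  have hfsub : ∀ β ∈ Γ, ∀ β' ∈ Γ, (p β).η ≤ (p β').η → ∀ τ, τ < θ.ord →
      (p β).f (p β).η τ ⊆ (p β').f (p β').η τ := by
    intro β hβ β' hβ' hle τ hτ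
    have hcomp : τ ∈ supp θ.ord ((p β).f (p β).η) ((p β').f (p β').η) := by
      rw [hsupp β hβ β' hβ']
      exact hτ
    exact node_subset_of_le (hfnode β hβ _ le_rfl τ hτ) (hfnode β' hβ' _ le_rfl τ hτ)
      hle hcomp.2
  have hβγ : ∀ β ∈ Γ, β < γ := fun β hβ => hΓsub hβ
  have hzlev : ∀ β ∈ Γ, ∀ i : Ordinal, γ ≤ i → i < δ → z β i ∈ level (p β).T (p β).η :=
    fun β hβ i hi hiδ => hztop β hβ i (lt_of_lt_of_le (hβγ β hβ) hi) hiδ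
  have hznode : ∀ β ∈ Γ, ∀ i : Ordinal, γ ≤ i → i < δ → IsNodeOf κ.ord (p β).η (z β i) :=
    fun β hβ i hi hiδ => hlevnode β hβ _ _ (hzlev β hβ i hi hiδ)
  have hzsub : ∀ β ∈ Γ, ∀ β' ∈ Γ, (p β).η ≤ (p β').η → ∀ i : Ordinal, γ ≤ i → i < δ →
      z β i ⊆ z β' i := by
    intro β hβ β' hβ' hle i hi hiδ
    rcases lt_trichotomy β β' with h | h | h
    · exact hzmono β hβ β' hβ' i h (lt_of_lt_of_le (hβγ β' hβ') hi) hiδ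
    · subst h; exact Set.Subset.rfl
    · have h1 : (p β').η ≤ (p β).η := (hdec β' hβ' β hβ h.le).1
      have h2 : (p β).η = (p β').η := le_antisymm hle h1
      have h3 : z β' i ⊆ z β i :=
        hzmono β' hβ' β hβ i h (lt_of_lt_of_le (hβγ β hβ) hi) hiδ
      rw [node_eq_of_subset (h2 ▸ hznode β' hβ' i hi hiδ) (hznode β hβ i hi hiδ) h3]
  -- the supremum of the heights
  set E := sSup ((fun β => (p β).η) '' Γ) with hE
  have hsmallΓ : Small.{0} Γ := small_subset hΓsub
  have hbdd : BddAbove ((fun β => (p β).η) '' Γ) := Ordinal.bddAbove_of_small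
  have hmemE : ∀ β ∈ Γ, (p β).η ≤ E :=
    fun β hβ => le_csSup hbdd (Set.mem_image_of_mem _ hβ)
  by_cases hA : ∃ β0 ∈ Γ, ∀ β ∈ Γ, (p β).η ≤ (p β0).η
  · -- Case A: the supremum of the heights is attained
    obtain ⟨β0, hβ0, hmax⟩ := hA
    have hEeq : E = (p β0).η := by
      refine le_antisymm (csSup_le (hΓne.image _) ?_) (hmemE β0 hβ0)
      rintro a ⟨β, hβ, rfl⟩
      exact hmax β hβ
    have hηeq : ∀ β ∈ Γ, β0 ≤ β → (p β).η = (p β0).η :=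
      fun β hβ h => le_antisymm (hmax β hβ) (hdec β0 hβ0 β hβ h).1
    have hTeq : ∀ β ∈ Γ, β0 ≤ β → (p β).T = (p β0).T := by
      intro β hβ h
      refine Set.Subset.antisymm ?_ (hTsub β0 hβ0 β hβ h)
      intro t ht
      obtain ⟨a, ha, hd, -⟩ := hnode β hβ t ht
      exact hmemT β0 hβ0 β hβ t ht a hd (ha.trans_eq (hηeq β hβ h))
    have hTsub0 : ∀ β ∈ Γ, (p β).T ⊆ (p β0).T := by
      intro β hβ
      rcases le_total β β0 with h | h
      · exact hTsub β hβ β0 hβ0 h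
      · exact (hTeq β hβ h).le
    have hzg : ∀ i : Ordinal, γ ≤ i → i < δ → (⋃ β ∈ Γ, z β i) = z β0 i := by
      intro i hi hiδ
      refine Set.Subset.antisymm (Set.iUnion₂_subset ?_) (Set.subset_biUnion_of_mem (u := fun β => z β i) hβ0)
      intro β hβ
      exact hzsub β hβ β0 hβ0 (hmax β hβ) i hi hiδ
    have hfl0 : ∀ τ, τ < θ.ord → (p β0).f (p β0).η τ ∈ level (p β0).T (p β0).η :=
      fun τ hτ => hflev β0 hβ0 _ le_rfl τ hτ
    refine ⟨p β0, fun i => ⋃ β ∈ Γ, z β i, hcond β0 hβ0, hEeq.symm, ?_, ?_, ?_⟩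
    · intro i hγi hiδ
      refine ⟨rfl, ?_⟩
      show (⋃ β ∈ Γ, z β i) ∈ (p β0).T
      rw [hzg i hγi.le hiδ]
      exact (hzlev β0 hβ0 i hγi.le hiδ).1
    · intro β hβ
      constructor
      · rcases le_total β β0 with h | h
        · exact hdec β hβ β0 hβ0 h
        · refine ⟨(hηeq β hβ h).le, ?_, ?_⟩
          · intro t
            constructor
            · intro ht
              obtain ⟨a, ha, hd, -⟩ := hnode β hβ t ht
              exact ⟨hTsub0 β hβ ht, a, ha, hd⟩
            · rintro ⟨ht, a, ha, hd⟩
              exact hmemT β hβ β0 hβ0 t ht a hd ha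
          · intro a ha τ hτ
            exact hfeq β0 hβ0 β hβ a (ha.trans (hmax β hβ)) ha τ hτ
      · exact hsupp β hβ β0 hβ0
    · intro y hy
      constructor
      · intro hyT
        refine ⟨y, ⟨β0, hβ0, hyT⟩, Or.inl ⟨0, hθ0, ?_⟩⟩
        refine (nstar_self ?_).symm
        rw [nodeOf_ndom_eq hy, (hfl0 0 hθ0).2]
      · rintro ⟨x, ⟨β, hβ, hx⟩, hcase⟩
        have hx0 : x ∈ (p β0).T := hTsub0 β hβ hx
        have hhom : UnifHomog (p β0).T := (hcond β0 hβ0).2.2.1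
        rcases hcase with ⟨τ, hτ, rfl⟩ | ⟨i, hγi, hiδ, rfl⟩
        · exact hhom x hx0 _ (hfl0 τ hτ).1
        · show nstar x (⋃ β ∈ Γ, z β i) ∈ (p β0).T
          rw [hzg i hγi.le hiδ]
          exact hhom x hx0 _ (hzlev β0 hβ0 i hγi.le hiδ).1
  · -- Case B: the supremum is a proper limit
    push_neg at hA
    have hltE : ∀ β ∈ Γ, (p β).η < E := by
      intro β hβ
      obtain ⟨β', hβ', h⟩ := hA β hβ
      exact lt_of_lt_of_le h (hmemE β' hβ')
    have hexE : ∀ a, a < E → ∃ β ∈ Γ, a < (p β).η := by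
      intro a ha
      obtain ⟨e, ⟨β, hβ, rfl⟩, h⟩ := exists_lt_of_lt_csSup (hΓne.image _) ha
      exact ⟨β, hβ, h⟩
    have hE0 : E ≠ 0 := by
      obtain ⟨β, hβ⟩ := hΓne
      exact (lt_of_le_of_lt zero_le (hltE β hβ)).ne'
    have hElim : Order.IsSuccLimit E := by
      rw [Ordinal.isSuccLimit_iff]
      refine ⟨hE0, Order.isSuccPrelimit_of_succ_lt ?_⟩
      intro a ha
      obtain ⟨β, hβ, h⟩ := hexE a ha
      exact lt_of_le_of_lt (Order.succ_le_of_lt h) (hltE β hβ)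
    -- unions of coherent chains of nodes indexed by Γ
    have hUnion : ∀ s : Ordinal → PNode,
        (∀ β ∈ Γ, IsNodeOf κ.ord (p β).η (s β)) →
        (∀ β ∈ Γ, ∀ β' ∈ Γ, (p β).η ≤ (p β').η → s β ⊆ s β') →
        IsNodeOf κ.ord E (⋃ β ∈ Γ, s β) ∧
          ∀ β ∈ Γ, nrestrict (⋃ β ∈ Γ, s β) (p β).η = s β := by
      intro s hn hc
      constructor
      · constructor
        · intro q hq
          obtain ⟨β, hβ, hqs⟩ := Set.mem_iUnion₂.1 hq
          exact ⟨((hn β hβ).1 q hqs).1.trans (hltE β hβ), ((hn β hβ).1 q hqs).2⟩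
        · intro ε hε
          obtain ⟨β, hβ, hεβ⟩ := hexE ε hε
          obtain ⟨v, hv, -⟩ := (hn β hβ).2 ε hεβ
          refine ⟨v, Set.mem_iUnion₂.2 ⟨β, hβ, hv⟩, ?_⟩
          intro u hu
          obtain ⟨β', hβ', hu'⟩ := Set.mem_iUnion₂.1 hu
          rcases le_total (p β).η (p β').η with h | h
          · have hvs := hc β hβ β' hβ' h hv
            obtain ⟨v', hv', huniq⟩ := (hn β' hβ').2 ε (lt_of_lt_of_le hεβ h)
            rw [huniq u hu', huniq v hvs]
          · have hus := hc β' hβ' β hβ h hu'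
            obtain ⟨v', hv', huniq⟩ := (hn β hβ).2 ε hεβ
            rw [huniq u hus, huniq v hv]
      · intro β hβ
        ext q
        constructor
        · rintro ⟨hq, hlt⟩
          obtain ⟨β', hβ', hq'⟩ := Set.mem_iUnion₂.1 hq
          rcases le_total (p β').η (p β).η with h | h
          · exact hc β' hβ' β hβ h hq'
          · obtain ⟨v, hv, -⟩ := (hn β hβ).2 q.1 hlt
            have hvs : (q.1, v) ∈ s β' := hc β hβ β' hβ' h hv
            obtain ⟨u, hu, huniq'⟩ := (hn β' hβ').2 q.1 (hlt.trans_le h)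
            have h1 : v = u := huniq' _ hvs
            have hq'' : (q.1, q.2) ∈ s β' := by rw [Prod.mk.eta]; exact hq'
            have h2 : q.2 = u := huniq' _ hq''
            have h3 : (q.1, q.2) ∈ s β := by rw [h2, ← h1]; exact hv
            rwa [Prod.mk.eta] at h3
        · intro hq
          exact ⟨Set.mem_iUnion₂.2 ⟨β, hβ, hq⟩, ((hn β hβ).1 q hq).1⟩
    -- the limit objects
    set b : Ordinal → PNode := fun τ => ⋃ β ∈ Γ, (p β).f (p β).η τ with hbdef
    set zg : Ordinal → PNode := fun i => ⋃ β ∈ Γ, z β i with hzgdef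
    have hbspec : ∀ τ, τ < θ.ord → IsNodeOf κ.ord E (b τ) ∧
        ∀ β ∈ Γ, nrestrict (b τ) (p β).η = (p β).f (p β).η τ :=
      fun τ hτ => hUnion _ (fun β hβ => hfnode β hβ _ le_rfl τ hτ)
        (fun β hβ β' hβ' h => hfsub β hβ β' hβ' h τ hτ)
    have hzgspec : ∀ i, γ ≤ i → i < δ → IsNodeOf κ.ord E (zg i) ∧
        ∀ β ∈ Γ, nrestrict (zg i) (p β).η = z β i :=
      fun i hi hiδ => hUnion _ (fun β hβ => hznode β hβ i hi hiδ)
        (fun β hβ β' hβ' h => hzsub β hβ β' hβ' h i hi hiδ)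
    have hfsubb : ∀ β ∈ Γ, ∀ τ, (p β).f (p β).η τ ⊆ b τ :=
      fun β hβ τ => Set.subset_biUnion_of_mem (u := fun β => (p β).f (p β).η τ) hβ
    have hzsubzg : ∀ β ∈ Γ, ∀ i, z β i ⊆ zg i :=
      fun β hβ i => Set.subset_biUnion_of_mem (u := fun β => z β i) hβ
    -- seeds of the top level
    set Seed : PNode → Prop :=
      fun b' => (∃ τ, τ < θ.ord ∧ b' = b τ) ∨ (∃ i, γ < i ∧ i < δ ∧ b' = zg i)
      with hSeeddef
    have hSeednode : ∀ b', Seed b' → IsNodeOf κ.ord E b' := by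
      rintro b' (⟨τ, hτ, rfl⟩ | ⟨i, hγi, hiδ, rfl⟩)
      · exact (hbspec τ hτ).1
      · exact (hzgspec i hγi.le hiδ).1
    have hSeeddom : ∀ b', Seed b' → ndom b' = Set.Iio E :=
      fun b' hb' => nodeOf_ndom_eq (hSeednode b' hb')
    have hSeedrest : ∀ b', Seed b' → ∀ β ∈ Γ,
        nrestrict b' (p β).η ∈ level (p β).T (p β).η := by
      rintro b' (⟨τ, hτ, rfl⟩ | ⟨i, hγi, hiδ, rfl⟩) β hβ
      · rw [(hbspec τ hτ).2 β hβ]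
        exact hflev β hβ _ le_rfl τ hτ
      · rw [(hzgspec i hγi.le hiδ).2 β hβ]
        exact hzlev β hβ i hγi.le hiδ
    -- the union of the trees
    set U : Set PNode := ⋃ β ∈ Γ, (p β).T with hUdef
    have hUT : ∀ x ∈ U, ∃ β ∈ Γ, x ∈ (p β).T := by
      intro x hx
      obtain ⟨β, hβ, h⟩ := Set.mem_iUnion₂.1 hx
      exact ⟨β, hβ, h⟩
    have hTU : ∀ β ∈ Γ, (p β).T ⊆ U :=
      fun β hβ => Set.subset_biUnion_of_mem (u := fun β => (p β).T) hβ
    have hUpair : ∀ x ∈ U, ∀ y ∈ U, ∃ β ∈ Γ, x ∈ (p β).T ∧ y ∈ (p β).T := by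
      intro x hx y hy
      obtain ⟨β1, hβ1, hx1⟩ := hUT x hx
      obtain ⟨β2, hβ2, hy2⟩ := hUT y hy
      rcases le_total β1 β2 with h | h
      · exact ⟨β2, hβ2, hTsub β1 hβ1 β2 hβ2 h hx1, hy2⟩
      · exact ⟨β1, hβ1, hx1, hTsub β2 hβ2 β1 hβ1 h hy2⟩
    have hUdom : ∀ x ∈ U, ∃ a, a < E ∧ ndom x = Set.Iio a ∧ IsNodeOf κ.ord a x := by
      intro x hx
      obtain ⟨β, hβ, hxT⟩ := hUT x hx
      obtain ⟨a, ha, hd, hn⟩ := hnode β hβ x hxT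
      exact ⟨a, lt_of_le_of_lt ha (hltE β hβ), hd, hn⟩
    have hUhom : ∀ x ∈ U, ∀ y ∈ U, nstar x y ∈ U := by
      intro x hx y hy
      obtain ⟨β, hβ, hx', hy'⟩ := hUpair x hx y hy
      exact hTU β hβ ((hcond β hβ).2.2.1 x hx' y hy')
    have hUres : ∀ x ∈ U, ∀ a : Ordinal, nrestrict x a ∈ U := by
      intro x hx a
      obtain ⟨β, hβ, hx'⟩ := hUT x hx
      exact hTU β hβ ((hcond β hβ).2.1 x hx' a)
    have hUmem : ∀ x ∈ U, ∀ β ∈ Γ, ∀ a : Ordinal, ndom x = Set.Iio a →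
        a ≤ (p β).η → x ∈ (p β).T := by
      intro x hx β hβ a hd ha
      obtain ⟨β', hβ', hx'⟩ := hUT x hx
      exact hmemT β hβ β' hβ' x hx' a hd ha
    have hSeedresU : ∀ b', Seed b' → ∀ a, a < E → nrestrict b' a ∈ U := by
      intro b' hb' a ha
      obtain ⟨β, hβ, hβa⟩ := hexE a ha
      rw [← nrestrict_nrestrict (s := b') hβa.le]
      exact hUres _ (hTU β hβ (hSeedrest b' hb' β hβ).1) a
    have hSeedresUlev : ∀ b', Seed b' → ∀ a, a < E →
        ndom (nrestrict b' a) = Set.Iio a := by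
      intro b' hb' a ha
      rw [ndom_nrestrict, hSeeddom b' hb']
      exact Set.inter_eq_self_of_subset_right (Set.Iio_subset_Iio ha.le)
    have hemptyT : ∀ β ∈ Γ, (∅ : PNode) ∈ (p β).T := by
      intro β hβ
      obtain ⟨t, ht, hd⟩ := (hcond β hβ).2.2.2.2.1 0 zero_le
      have ht0 : t = ∅ := by
        ext q
        constructor
        · intro hq
          have h1 : q.1 ∈ ndom t := fst_mem_ndom hq
          rw [hd] at h1
          exact absurd h1 (not_lt_of_ge (zero_le : (0:Ordinal) ≤ q.1))
        · intro hq
          exact absurd hq (Set.notMem_empty q)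
      rw [← ht0]
      exact ht
    have hempty : (∅ : PNode) ∈ U := hTU hΓne.choose hΓne.choose_spec
      (hemptyT hΓne.choose hΓne.choose_spec)
    -- the new tree
    set qT : Set PNode := U ∪ {y | ∃ x ∈ U, ∃ b', Seed b' ∧ y = nstar x b'} with hqTdef
    have hUsubq : U ⊆ qT := Set.subset_union_left
    have htop_mem : ∀ x ∈ U, ∀ b', Seed b' → nstar x b' ∈ qT :=
      fun x hx b' hb' => Set.mem_union_right _ ⟨x, hx, b', hb', rfl⟩
    have hSeedq : ∀ b', Seed b' → b' ∈ qT ∧ ndom b' = Set.Iio E := by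
      intro b' hb'
      refine ⟨?_, hSeeddom b' hb'⟩
      have h1 : nstar ∅ b' = b' := nstar_empty b'
      rw [← h1]
      exact htop_mem ∅ hempty b' hb'
    have hqdom : ∀ y ∈ qT,
        (∃ a, a < E ∧ ndom y = Set.Iio a ∧ IsNodeOf κ.ord a y ∧ y ∈ U) ∨
        (ndom y = Set.Iio E ∧ IsNodeOf κ.ord E y ∧
          ∃ x ∈ U, ∃ b', Seed b' ∧ y = nstar x b') := by
      intro y hy
      rcases hy with hyU | ⟨x, hx, b', hb', rfl⟩
      · obtain ⟨a, ha, hd, hn⟩ := hUdom y hyU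
        exact Or.inl ⟨a, ha, hd, hn, hyU⟩
      · refine Or.inr ⟨?_, ?_, x, hx, b', hb', rfl⟩
        · rw [ndom_nstar, hSeeddom b' hb']
        · obtain ⟨a, ha, hd, hn⟩ := hUdom x hx
          exact nodeOf_nstar hn (hSeednode b' hb') ha.le
    have hqnode : ∀ y ∈ qT, ∃ a, a ≤ E ∧ ndom y = Set.Iio a ∧ IsNodeOf κ.ord a y := by
      intro y hy
      rcases hqdom y hy with ⟨a, ha, hd, hn, -⟩ | ⟨hd, hn, -⟩
      · exact ⟨a, ha.le, hd, hn⟩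
      · exact ⟨E, le_rfl, hd, hn⟩
    have hqsmalldom : ∀ y ∈ qT, ∀ a : Ordinal, ndom y = Set.Iio a → a < E → y ∈ U := by
      intro y hy a hd ha
      rcases hqdom y hy with ⟨a', -, hd', -, hyU⟩ | ⟨hd', -, -⟩
      · exact hyU
      · rw [hd'] at hd
        exact absurd (Iio_inj hd ▸ ha) (lt_irrefl E)
    have hxlt : ∀ x ∈ U, ∀ β ∈ Γ, x ∈ (p β).T → ∀ q ∈ x, Prod.fst q < (p β).η := by
      intro x hx β hβ hxT q hq
      obtain ⟨a, ha, hd, hn⟩ := hnode β hβ x hxT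
      exact lt_of_lt_of_le (hn.1 q hq).1 ha
    -- streamlined
    have hqstream : IsStreamlined qT := by
      intro t ht a
      rcases ht with htU | ⟨x, hx, b', hb', rfl⟩
      · exact hUsubq (hUres t htU a)
      · rw [nrestrict_nstar]
        by_cases ha : a < E
        · exact hUsubq (hUhom x hx _ (hSeedresU b' hb' a ha))
        · have h1 : nrestrict b' a = b' := by
            refine nrestrict_eq_self ?_
            intro q hq
            have h2 : q.1 ∈ ndom b' := fst_mem_ndom hq
            rw [hSeeddom b' hb'] at h2
            exact lt_of_lt_of_le h2 (le_of_not_gt ha)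
          rw [h1]
          exact htop_mem x hx b' hb'
    -- uniform homogeneity
    have hqhom : UnifHomog qT := by
      intro s hs t ht
      rcases ht with htU | ⟨x, hx, b', hb', rfl⟩
      · -- t is an old node
        obtain ⟨at', hat, hdt, hnt⟩ := hUdom t htU
        rcases hs with hsU | ⟨xs, hxs, bs, hbs, rfl⟩
        · exact hUsubq (hUhom s hsU t htU)
        · have hds : ndom (nstar xs bs) = Set.Iio E := by
            rw [ndom_nstar, hSeeddom bs hbs]
          have h1 : nstar (nstar xs bs) t = nrestrict (nstar xs bs) at' := by
            refine nstar_eq_nrestrict hdt ?_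
            rw [hdt, hds]
            exact Set.Iio_subset_Iio hat.le
          rw [h1]
          exact hqstream _ (htop_mem xs hxs bs hbs) at'
      · -- t = x * b' is a new top node
        rcases hs with hsU | ⟨xs, hxs, bs, hbs, rfl⟩
        · -- s is an old node
          obtain ⟨β, hβ, hsT, hxT⟩ := hUpair s hsU x hx
          have h1 : nstar s (nstar x b') =
              nstar (nstar s (nstar x (nrestrict b' (p β).η))) b' :=
            nstar_nstar (hxlt s hsU β hβ hsT) (hxlt x hx β hβ hxT)
          rw [h1]
          refine htop_mem _ ?_ b' hb'
          exact hUhom s hsU _ (hUhom x hx _ (hTU β hβ (hSeedrest b' hb' β hβ).1))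
        · -- s is a new top node: s * t = s
          have h1 : nstar (nstar xs bs) (nstar x b') = nstar xs bs := by
            refine nstar_self ?_
            rw [ndom_nstar, ndom_nstar, hSeeddom bs hbs, hSeeddom b' hb']
          rw [h1]
          exact htop_mem xs hxs bs hbs
    -- levels
    have hlev : ∀ β ∈ Γ, ∀ a : Ordinal, a ≤ (p β).η → level qT a = level (p β).T a := by
      intro β hβ a ha
      ext t
      constructor
      · rintro ⟨ht, hd⟩
        exact ⟨hUmem t (hqsmalldom t ht a hd (lt_of_le_of_lt ha (hltE β hβ))) β hβ a hd ha,
          hd⟩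
      · rintro ⟨ht, hd⟩
        exact ⟨hUsubq (hTU β hβ ht), hd⟩
    have hlevE : ∀ y, y ∈ level qT E ↔ ∃ x ∈ U, ∃ b', Seed b' ∧ y = nstar x b' := by
      intro y
      constructor
      · rintro ⟨hy, hd⟩
        rcases hqdom y hy with ⟨a, ha, hd', -, -⟩ | ⟨-, -, h⟩
        · rw [hd'] at hd
          exact absurd (Iio_inj hd ▸ ha) (lt_irrefl E)
        · exact h
      · rintro ⟨x, hx, b', hb', rfl⟩
        refine ⟨htop_mem x hx b' hb', ?_⟩
        rw [ndom_nstar, hSeeddom b' hb']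
    -- normalized form of top nodes
    have hnormal : ∀ y ∈ level qT E, ∃ β ∈ Γ, ∃ x ∈ level (p β).T (p β).η,
        ∃ b', Seed b' ∧ y = nstar x b' := by
      intro y hy
      obtain ⟨x, hx, b', hb', rfl⟩ := (hlevE y).1 hy
      obtain ⟨β, hβ, hxT⟩ := hUT x hx
      refine ⟨β, hβ, nstar x (nrestrict b' (p β).η), ⟨?_, ?_⟩, b', hb', ?_⟩
      · exact (hcond β hβ).2.2.1 x hxT _ (hSeedrest b' hb' β hβ).1
      · rw [ndom_nstar]
        exact (hSeedrest b' hb' β hβ).2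
      · exact nstar_normalize (hxlt x hx β hβ hxT)
    -- the limit ascent-path function
    have hch : ∀ a : Ordinal, a < E → ∃ β, β ∈ Γ ∧ a < (p β).η := by
      intro a ha
      obtain ⟨β, hβ, h⟩ := hexE a ha
      exact ⟨β, hβ, h⟩
    set qf : Ordinal → Ordinal → PNode := fun a τ =>
      if h : a < E then (p (hch a h).choose).f a τ else b τ with hqfdef
    have hqfeq : ∀ a : Ordinal, ∀ β ∈ Γ, a ≤ (p β).η → ∀ τ, τ < θ.ord →
        qf a τ = (p β).f a τ := by
      intro a β hβ ha τ hτ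
      have hae : a < E := lt_of_le_of_lt ha (hltE β hβ)
      show (if h : a < E then (p (hch a h).choose).f a τ else b τ) = (p β).f a τ
      rw [dif_pos hae]
      exact hfeq _ (hch a hae).choose_spec.1 β hβ a (hch a hae).choose_spec.2.le ha τ hτ
    have hqfE : ∀ τ, qf E τ = b τ := by
      intro τ
      show (if h : E < E then (p (hch E h).choose).f E τ else b τ) = b τ
      rw [dif_neg (lt_irrefl E)]
    have hSeedb : ∀ τ, τ < θ.ord → Seed (b τ) := fun τ hτ => Or.inl ⟨τ, hτ, rfl⟩
    have hblev : ∀ τ, τ < θ.ord → b τ ∈ level qT E := by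
      intro τ hτ
      exact (hlevE _).2 ⟨∅, hempty, b τ, hSeedb τ hτ, (nstar_empty _).symm⟩
    have hlevne : ∀ a : Ordinal, a ≤ E → (level qT a).Nonempty := by
      intro a ha
      rcases eq_or_lt_of_le ha with rfl | ha
      · exact ⟨b 0, hblev 0 hθ0⟩
      · obtain ⟨β, hβ, h⟩ := hexE a ha
        obtain ⟨t, ht⟩ := (hcond β hβ).2.2.2.2.1 a h.le
        refine ⟨t, ?_⟩
        rw [hlev β hβ a h.le]
        exact ht
    have hlt1' : ∀ a c : Ordinal, a < c + 1 → a ≤ c := by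
      intro a c h
      rwa [Ordinal.add_one_eq_succ, Order.lt_succ_iff] at h
    -- normality
    have hqnormal : IsNormalOfHeight qT (E + 1) := by
      intro x hx a ha
      have haE : a ≤ E := hlt1' a E ha
      obtain ⟨ax, hax, hdx, hnx⟩ := hqnode x hx
      rcases le_total a ax with h | h
      · refine ⟨nrestrict x a, ⟨hqstream x hx a, ?_⟩, Or.inr (fun q hq => hq.1)⟩
        rw [ndom_nrestrict, hdx]
        exact Set.inter_eq_self_of_subset_right (Set.Iio_subset_Iio h)
      · rcases eq_or_lt_of_le haE with rfl | haE'
        · rcases eq_or_lt_of_le hax with rfl | haxE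
          · exact ⟨x, ⟨hx, hdx⟩, Or.inl Set.Subset.rfl⟩
          · have hxU : x ∈ U := hqsmalldom x hx ax hdx haxE
            refine ⟨nstar x (b 0), ?_, Or.inl (subset_nstar ?_)⟩
            · exact (hlevE _).2 ⟨x, hxU, b 0, hSeedb 0 hθ0, rfl⟩
            · rw [hdx, hSeeddom _ (hSeedb 0 hθ0)]
              exact Set.Iio_subset_Iio hax
        · have hxU : x ∈ U := hqsmalldom x hx ax hdx (lt_of_le_of_lt h haE')
          refine ⟨nstar x (nrestrict (b 0) a),
            ⟨hUsubq (hUhom x hxU _ (hSeedresU (b 0) (hSeedb 0 hθ0) a haE')), ?_⟩,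
            Or.inl (subset_nstar ?_)⟩
          · rw [ndom_nstar]
            exact hSeedresUlev (b 0) (hSeedb 0 hθ0) a haE'
          · rw [hdx, hSeedresUlev (b 0) (hSeedb 0 hθ0) a haE']
            exact Set.Iio_subset_Iio h
    -- membership transfer for the limit seeds
    have hbmem : ∀ τ, τ < θ.ord → ∀ ε v : Ordinal, (ε, v) ∈ b τ → ∀ β ∈ Γ,
        ε < (p β).η → (ε, v) ∈ (p β).f (p β).η τ := by
      intro τ hτ ε v hv β hβ hε
      rw [← (hbspec τ hτ).2 β hβ]
      exact ⟨hv, hε⟩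
    have hzgmem : ∀ i, γ ≤ i → i < δ → ∀ ε v : Ordinal, (ε, v) ∈ zg i → ∀ β ∈ Γ,
        ε < (p β).η → (ε, v) ∈ z β i := by
      intro i hi hiδ ε v hv β hβ hε
      rw [← (hzgspec i hi hiδ).2 β hβ]
      exact ⟨hv, hε⟩
    have hbE : ∀ τ, τ < θ.ord → ∀ q : Ordinal × Ordinal, q ∈ b τ → q.1 < E :=
      fun τ hτ q hq => ((hbspec τ hτ).1.1 q hq).1
    -- the ascent path through the new tree
    have hqpath : MEAscentPath θ.ord (InFX ζ X) qT (E + 1) qf := by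
      refine ⟨?_, ?_, ?_⟩
      · intro a ha τ hτ
        rcases eq_or_lt_of_le (hlt1' a E ha) with rfl | haE
        · rw [hqfE]
          exact hblev τ hτ
        · obtain ⟨β, hβ, hβa⟩ := hexE a haE
          rw [hqfeq a β hβ hβa.le τ hτ, hlev β hβ a hβa.le]
          exact hflev β hβ a hβa.le τ hτ
      · intro a a' haa' ha'
        rcases eq_or_lt_of_le (hlt1' a' E ha') with rfl | haE
        · obtain ⟨β, hβ, hβa⟩ := hexE a haa'
          refine hInFmono ((hcond β hβ).2.2.2.2.2.2.1.2.1 a (p β).η hβa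
            (hle1 _ _ le_rfl)) ?_
          rintro τ ⟨hτ, hor⟩
          refine ⟨hτ, ?_⟩
          rw [hqfeq a β hβ hβa.le τ hτ, hqfE]
          have h1 : (p β).f a τ ⊆ (p β).f (p β).η τ :=
            node_subset_of_le (hfnode β hβ a hβa.le τ hτ) (hfnode β hβ _ le_rfl τ hτ)
              hβa.le hor
          exact Or.inl (h1.trans (hfsubb β hβ τ))
        · obtain ⟨β, hβ, hβa⟩ := hexE a' haE
          refine hInFmono ((hcond β hβ).2.2.2.2.2.2.1.2.1 a a' haa'
            (hle1 _ _ hβa.le)) ?_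
          rintro τ ⟨hτ, hor⟩
          refine ⟨hτ, ?_⟩
          rwa [hqfeq a β hβ (haa'.le.trans hβa.le) τ hτ, hqfeq a' β hβ hβa.le τ hτ]
      · intro a ha0 ha τ τ' hτ hτ' hne
        rcases eq_or_lt_of_le (hlt1' a E ha) with rfl | haE
        · intro ε v w hv hw
          rw [hqfE] at hv hw
          obtain ⟨β, hβ, hβε⟩ := hexE ε (hbE τ hτ (ε, v) hv)
          have h1 := hbmem τ hτ ε v hv β hβ hβε
          have h2 := hbmem τ' hτ' ε w hw β hβ hβε
          exact (hcond β hβ).2.2.2.2.2.2.1.2.2 (p β).η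
            (lt_of_le_of_lt (zero_le : (0:Ordinal) ≤ ε) hβε) (hle1 _ _ le_rfl)
            τ τ' hτ hτ' hne ε v w h1 h2
        · obtain ⟨β, hβ, hβa⟩ := hexE a haE
          rw [hqfeq a β hβ hβa.le τ hτ, hqfeq a β hβ hβa.le τ' hτ']
          exact (hcond β hβ).2.2.2.2.2.2.1.2.2 a ha0 (hle1 _ _ hβa.le) τ τ' hτ hτ' hne
    -- the mutual-exclusivity clause for the new top level
    have hqmutexc : ∀ a : Ordinal, 0 < a → a ≤ E → ∀ t ∈ level qT a,
        InFX ζ X {τ | τ < θ.ord ∧ MutExc t (qf a τ)} := by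
      intro a ha0 haE t ht
      rcases eq_or_lt_of_le haE with rfl | haE'
      · -- the top level
        obtain ⟨β, hβ, x, hxlev, b', hb', rfl⟩ := hnormal t ht
        have hxnode := hlevnode β hβ _ x hxlev
        have hS1 : InFX ζ X {τ | τ < θ.ord ∧ MutExc x ((p β).f (p β).η τ)} := by
          rcases eq_zero_or_pos (p β).η with h0 | h0
          · refine hInFmono hInFIio ?_
            intro τ hτ
            refine ⟨hτ, ?_⟩
            intro ε v w hv hw
            have h1 := (hxnode.1 (ε, v) hv).1
            rw [h0] at h1
            exact absurd h1 (not_lt_of_ge (zero_le : (0:Ordinal) ≤ ε))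
          · exact (hcond β hβ).2.2.2.2.2.2.2.2.2 (p β).η h0 le_rfl x hxlev
        rcases hb' with ⟨τ0, hτ0, rfl⟩ | ⟨i, hγi, hiδ, rfl⟩
        · refine hInFmono (hInFinter hS1 (hInFne τ0)) ?_
          rintro τ ⟨⟨hτ, hmx⟩, -, hτne⟩
          refine ⟨hτ, ?_⟩
          rw [hqfE]
          intro ε v w hv hw
          rcases mem_nstar.1 hv with ⟨hvx, -⟩ | ⟨hvb, -⟩
          · exact hmx ε v w hvx (hbmem τ hτ ε w hw β hβ (hxnode.1 _ hvx).1)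
          · obtain ⟨β', hβ', hβε⟩ := hexE ε (hbE τ0 hτ0 (ε, v) hvb)
            exact (hcond β' hβ').2.2.2.2.2.2.1.2.2 (p β').η
              (lt_of_le_of_lt (zero_le : (0:Ordinal) ≤ ε) hβε) (hle1 _ _ le_rfl)
              τ0 τ hτ0 hτ (fun h => hτne h.symm) ε v w
              (hbmem τ0 hτ0 ε v hvb β' hβ' hβε) (hbmem τ hτ ε w hw β' hβ' hβε)
        · refine hInFmono (hInFinter hS1 (hInFne 0)) ?_
          rintro τ ⟨⟨hτ, hmx⟩, -, hτne⟩
          refine ⟨hτ, ?_⟩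
          rw [hqfE]
          intro ε v w hv hw
          rcases mem_nstar.1 hv with ⟨hvx, -⟩ | ⟨hvz, -⟩
          · exact hmx ε v w hvx (hbmem τ hτ ε w hw β hβ (hxnode.1 _ hvx).1)
          · obtain ⟨β', hβ', hβε⟩ := hexE ε
              (((hzgspec i hγi.le hiδ).1.1 (ε, v) hvz).1)
            exact hzme β' hβ' i (lt_of_lt_of_le (hβγ β' hβ') hγi.le) hiδ τ
              (pos_iff_ne_zero.2 hτne) hτ ε v w
              (hzgmem i hγi.le hiδ ε v hvz β' hβ' hβε)
              (hbmem τ hτ ε w hw β' hβ' hβε)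
      · -- a lower level
        obtain ⟨β, hβ, hβa⟩ := hexE a haE'
        have ht' : t ∈ level (p β).T a := by
          rw [← hlev β hβ a hβa.le]
          exact ht
        refine hInFmono ((hcond β hβ).2.2.2.2.2.2.2.2.2 a ha0 hβa.le t ht') ?_
        rintro τ ⟨hτ, hmx⟩
        refine ⟨hτ, ?_⟩
        rwa [hqfeq a β hβ hβa.le τ hτ]
    -- the diagonal limit node `w = zg γ` and its branches
    have hwnode : IsNodeOf κ.ord E (zg γ) := (hzgspec γ le_rfl hγδ).1
    have hwres : ∀ a : Ordinal, a < E →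
        nrestrict (zg γ) a ∈ U ∧ ndom (nrestrict (zg γ) a) = Set.Iio a := by
      intro a ha
      obtain ⟨β, hβ, hβa⟩ := hexE a ha
      constructor
      · rw [← nrestrict_nrestrict (s := zg γ) hβa.le, (hzgspec γ le_rfl hγδ).2 β hβ]
        exact hUres _ (hTU β hβ (hzlev β hβ γ le_rfl hγδ).1) a
      · rw [ndom_nrestrict, nodeOf_ndom_eq hwnode]
        exact Set.inter_eq_self_of_subset_right (Set.Iio_subset_Iio ha.le)
    -- `x * zg γ` never belongs to the new tree
    have hwnot : ∀ x ∈ U, nstar x (zg γ) ∉ qT := by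
      intro x hx hmem
      obtain ⟨ax, haxE, hdx, hnx⟩ := hUdom x hx
      have hd : ndom (nstar x (zg γ)) = Set.Iio E := by
        rw [ndom_nstar, nodeOf_ndom_eq hwnode]
      obtain ⟨x', hx', b', hb', heq⟩ := (hlevE _).1 ⟨hmem, hd⟩
      obtain ⟨ax', hax'E, hdx', hnx'⟩ := hUdom x' hx'
      set a := max ax ax' with hadef
      have haE : a < E := max_lt haxE hax'E
      obtain ⟨β, hβ, hβa⟩ := hexE a haE
      have hznγ : IsNodeOf κ.ord (p β).η (z β γ) := hznode β hβ γ le_rfl hγδ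
      have hagree : ∀ ε v : Ordinal, a ≤ ε → ((ε, v) ∈ zg γ ↔ (ε, v) ∈ b') := by
        intro ε v hεa
        have hεx : ε ∉ ndom x := by
          rw [hdx]
          exact fun hc => absurd (lt_of_lt_of_le hc ((le_max_left ax ax').trans hεa))
            (lt_irrefl ε)
        have hεx' : ε ∉ ndom x' := by
          rw [hdx']
          exact fun hc => absurd (lt_of_lt_of_le hc ((le_max_right ax ax').trans hεa))
            (lt_irrefl ε)
        constructor
        · intro hv
          have h2 : (ε, v) ∈ nstar x (zg γ) := mem_nstar.2 (Or.inr ⟨hv, hεx⟩)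
          rw [heq] at h2
          rcases mem_nstar.1 h2 with ⟨h3, -⟩ | ⟨h3, -⟩
          · exact absurd (fst_mem_ndom h3) hεx'
          · exact h3
        · intro hv
          have h2 : (ε, v) ∈ nstar x' b' := mem_nstar.2 (Or.inr ⟨hv, hεx'⟩)
          rw [← heq] at h2
          rcases mem_nstar.1 h2 with ⟨h3, -⟩ | ⟨h3, -⟩
          · exact absurd (fst_mem_ndom h3) hεx
          · exact h3
      have hEqStar : ∀ s' : PNode,
          (∀ ε v : Ordinal, a ≤ ε → ε < (p β).η → ((ε, v) ∈ z β γ ↔ (ε, v) ∈ s')) →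
          IsNodeOf κ.ord (p β).η s' → EqStar (z β γ) s' := by
        intro s' hiff hn'
        refine ⟨by rw [nodeOf_ndom_eq hznγ, nodeOf_ndom_eq hn'], a, ?_, ?_⟩
        · rw [nodeOf_ndom_eq hznγ]
          exact hβa
        · intro ε hεa v
          by_cases hεβ : ε < (p β).η
          · exact hiff ε v hεa hεβ
          · constructor
            · intro hv
              exact absurd ((hznγ.1 _ hv).1) hεβ
            · intro hv
              exact absurd ((hn'.1 _ hv).1) hεβ
      rcases hb' with ⟨τ, hτ, rfl⟩ | ⟨i, hγi, hiδ, rfl⟩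
      · -- b' = b τ : contradicts hzf0 / hzme
        have hes : EqStar (z β γ) ((p β).f (p β).η τ) := by
          refine hEqStar _ ?_ (hfnode β hβ _ le_rfl τ hτ)
          intro ε v hεa hεβ
          constructor
          · intro hv
            exact hbmem τ hτ ε v ((hagree ε v hεa).1 (hzsubzg β hβ γ hv)) β hβ hεβ
          · intro hv
            exact hzgmem γ le_rfl hγδ ε v ((hagree ε v hεa).2 (hfsubb β hβ τ hv)) β hβ hεβ
        rcases eq_zero_or_pos τ with rfl | hτ0
        · exact hzf0 β hβ γ (hβγ β hβ) hγδ hes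
        · obtain ⟨v, hv⟩ : ∃ v, (a, v) ∈ z β γ := by
            have h5 : a ∈ ndom (z β γ) := by
              rw [nodeOf_ndom_eq hznγ]
              exact hβa
            exact h5
          have hv' : (a, v) ∈ (p β).f (p β).η τ :=
            hbmem τ hτ a v ((hagree a v le_rfl).1 (hzsubzg β hβ γ hv)) β hβ hβa
          exact hzme β hβ γ (hβγ β hβ) hγδ τ hτ0 hτ a v v hv hv' rfl
      · -- b' = zg i : contradicts hzdist
        have hes : EqStar (z β γ) (z β i) := by
          refine hEqStar _ ?_ (hznode β hβ i hγi.le hiδ)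
          intro ε v hεa hεβ
          constructor
          · intro hv
            exact hzgmem i hγi.le hiδ ε v ((hagree ε v hεa).1 (hzsubzg β hβ γ hv)) β hβ hεβ
          · intro hv
            exact hzgmem γ le_rfl hγδ ε v
              ((hagree ε v hεa).2 (hzsubzg β hβ i hv)) β hβ hεβ
        exact hzdist β hβ γ (hβγ β hβ) hγδ i (lt_of_lt_of_le (hβγ β hβ) hγi.le) hiδ
          (ne_of_gt hγi) hes
    -- transfer of branches and vanishing levels
    have hBelt : ∀ a : Ordinal, ∀ B : Set PNode, (∀ x ∈ B, ∃ c, ndom x = Set.Iio c) →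
        ({c | ∃ x ∈ B, ndom x = Set.Iio c} = Set.Iio a) →
        ∀ x ∈ B, ∃ c, c < a ∧ ndom x = Set.Iio c := by
      intro a B hdoms hset x hx
      obtain ⟨c, hc⟩ := hdoms x hx
      have h1 : c ∈ Set.Iio a := by
        rw [← hset]
        exact ⟨x, hx, hc⟩
      exact ⟨c, h1, hc⟩
    have hbranch_qt : ∀ β ∈ Γ, ∀ a : Ordinal, a ≤ (p β).η → ∀ B : Set PNode,
        IsBranch qT a B ↔ IsBranch (p β).T a B := by
      intro β hβ a ha B
      constructor
      · rintro ⟨hBsub, hch, hset⟩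
        refine ⟨?_, hch, hset⟩
        intro x hxB
        obtain ⟨c, hc, hdc⟩ := hBelt a B
          (fun x hx => (hqnode x (hBsub hx)).imp (fun c h => h.2.1)) hset x hxB
        exact hUmem x (hqsmalldom x (hBsub hxB) c hdc
          (lt_of_lt_of_le hc (ha.trans (hltE β hβ).le))) β hβ c hdc (hc.le.trans ha)
      · rintro ⟨hBsub, hch, hset⟩
        exact ⟨fun x hx => hUsubq (hTU β hβ (hBsub hx)), hch, hset⟩
    have hsUdom : ∀ a : Ordinal, Order.IsSuccLimit a → ∀ B : Set PNode,
        (∀ x ∈ B, ∃ c, c < a ∧ ndom x = Set.Iio c) →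
        ({c | ∃ x ∈ B, ndom x = Set.Iio c} = Set.Iio a) → ndom (⋃₀ B) = Set.Iio a := by
      intro a halim B helt hset
      ext ε
      constructor
      · rintro ⟨v, hv⟩
        obtain ⟨x, hxB, hvx⟩ := Set.mem_sUnion.1 hv
        obtain ⟨c, hc, hdc⟩ := helt x hxB
        have h1 : ε ∈ ndom x := ⟨v, hvx⟩
        rw [hdc] at h1
        exact lt_trans h1 hc
      · intro hε
        have h2 : Order.succ ε ∈ Set.Iio a := halim.succ_lt hε
        rw [← hset] at h2
        obtain ⟨x, hxB, hdx⟩ := h2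
        have h3 : ε ∈ ndom x := by
          rw [hdx]
          exact Order.lt_succ ε
        obtain ⟨v, hv⟩ := h3
        exact ⟨v, Set.mem_sUnion.2 ⟨x, hxB, hv⟩⟩
    have hVtrans : ∀ β ∈ Γ, ∀ a : Ordinal, a ≤ (p β).η →
        (a ∈ VSet qT ↔ a ∈ VSet (p β).T) := by
      intro β hβ a ha
      have haE : a < E := lt_of_le_of_lt ha (hltE β hβ)
      constructor
      · rintro ⟨halim, hbr⟩
        refine ⟨halim, ?_⟩
        intro x hxT hxd
        obtain ⟨B, hB, hxB, hBun⟩ := hbr x (hUsubq (hTU β hβ hxT)) hxd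
        refine ⟨B, (hbranch_qt β hβ a ha B).1 hB, hxB, ?_⟩
        intro hc
        exact hBun (hUsubq (hTU β hβ hc))
      · rintro ⟨halim, hbr⟩
        refine ⟨halim, ?_⟩
        intro x hxT hxd
        obtain ⟨c, hc, hdc⟩ := hxd
        have hxb : x ∈ (p β).T := hUmem x
          (hqsmalldom x hxT c hdc (lt_trans hc haE)) β hβ c hdc (hc.le.trans ha)
        obtain ⟨B, hB, hxB, hBun⟩ := hbr x hxb ⟨c, hc, hdc⟩
        refine ⟨B, (hbranch_qt β hβ a ha B).2 hB, hxB, ?_⟩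
        intro hc2
        have hBdom : ndom (⋃₀ B) = Set.Iio a := hsUdom a halim B
          (hBelt a B (fun y hy => (hnode β hβ y (hB.1 hy)).imp
            (fun c h => h.2.1)) hB.2.2) hB.2.2
        exact hBun (hUmem _ (hqsmalldom _ hc2 a hBdom haE) β hβ a hBdom ha)
    -- `E` is a vanishing level of the new tree
    have hVE : E ∈ VSet qT := by
      refine ⟨hElim, ?_⟩
      intro x hxq hxd
      obtain ⟨c, hc, hdx⟩ := hxd
      have hxU : x ∈ U := hqsmalldom x hxq c hdx hc
      refine ⟨(fun a => nstar x (nrestrict (zg γ) a)) '' Set.Iio E, ⟨?_, ?_, ?_⟩, ?_, ?_⟩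
      · rintro y ⟨a, ha, rfl⟩
        exact hUsubq (hUhom x hxU _ (hwres a ha).1)
      · rintro y ⟨a, ha, rfl⟩ y' ⟨a', ha', rfl⟩
        have hmono : ∀ c1 c2 : Ordinal, c1 ≤ c2 →
            nstar x (nrestrict (zg γ) c1) ⊆ nstar x (nrestrict (zg γ) c2) := by
          intro c1 c2 h12
          refine nstar_mono_right ?_ ?_
          · intro q hq
            exact ⟨hq.1, lt_of_lt_of_le hq.2 h12⟩
          · rw [ndom_nrestrict, ndom_nrestrict]
            exact Set.inter_subset_inter_right _ (Set.Iio_subset_Iio h12)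
        rcases le_total a a' with h | h
        · exact Or.inl (hmono a a' h)
        · exact Or.inr (hmono a' a h)
      · ext c'
        constructor
        · rintro ⟨y, ⟨a, ha, rfl⟩, hdy⟩
          rw [ndom_nstar, (hwres a ha).2] at hdy
          rw [← Iio_inj hdy]
          exact ha
        · intro hc'
          exact ⟨nstar x (nrestrict (zg γ) c'), ⟨c', hc', rfl⟩, by
            rw [ndom_nstar, (hwres c' hc').2]⟩
      · refine ⟨c, hc, ?_⟩
        show nstar x (nrestrict (zg γ) c) = x
        refine nstar_self ?_
        rw [hdx, (hwres c hc).2]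
      · have hun : ⋃₀ ((fun a => nstar x (nrestrict (zg γ) a)) '' Set.Iio E) =
            nstar x (zg γ) := by
          apply Set.Subset.antisymm
          · refine Set.sUnion_subset ?_
            rintro y ⟨a, ha, rfl⟩
            refine nstar_mono_right (fun q hq => hq.1) ?_
            rw [ndom_nrestrict]
            exact Set.inter_subset_left
          · intro q hq
            have hq1E : q.1 < E := by
              rcases mem_nstar.1 hq with ⟨hqx, hqd⟩ | ⟨hqw, -⟩
              · have := hqd
                rwa [nodeOf_ndom_eq hwnode] at this
              · exact (hwnode.1 q hqw).1
            have hsuccE : q.1 + 1 < E := by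
              rw [Ordinal.add_one_eq_succ]
              exact hElim.succ_lt hq1E
            refine Set.mem_sUnion.2 ⟨nstar x (nrestrict (zg γ) (q.1 + 1)),
              ⟨q.1 + 1, hsuccE, rfl⟩, ?_⟩
            rcases mem_nstar.1 hq with ⟨hqx, hqd⟩ | ⟨hqw, hqnx⟩
            · refine mem_nstar.2 (Or.inl ⟨hqx, ?_⟩)
              rw [(hwres _ hsuccE).2]
              exact lt_add_one q.1
            · exact mem_nstar.2 (Or.inr ⟨⟨hqw, lt_add_one q.1⟩, hqnx⟩)
        rw [hun]
        exact hwnot x hxU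
    -- the set of vanishing levels is closed
    have hIio0 : Set.Iio (0 : Ordinal) = ∅ := by
      ext ε
      simp
    have hVsub : ∀ v ∈ VSet qT, v ≤ E := by
      rintro v ⟨hvlim, hbr⟩
      by_contra hlt
      push_neg at hlt
      obtain ⟨B, hB, -, -⟩ := hbr ∅ (hUsubq hempty)
        ⟨0, hvlim.pos, by rw [ndom_empty, hIio0]⟩
      have h1 : Order.succ E ∈ Set.Iio v := hvlim.succ_lt hlt
      rw [← hB.2.2] at h1
      obtain ⟨x, hxB, hdx⟩ := h1
      obtain ⟨a, haE, hdx', -⟩ := hqnode x (hB.1 hxB)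
      rw [hdx'] at hdx
      rw [Iio_inj hdx] at haE
      exact absurd haE (not_le_of_gt (Order.lt_succ E))
    have hVclosed : OrdClosed (VSet qT) := by
      intro a halim hcl
      rcases lt_trichotomy a E with haE | rfl | haE
      · obtain ⟨β, hβ, hβa⟩ := hexE a haE
        refine (hVtrans β hβ a hβa.le).2 ?_
        refine (hcond β hβ).2.2.2.2.2.2.2.1 a halim ?_
        intro c hc
        obtain ⟨v, hvV, hvI⟩ := hcl c hc
        exact ⟨v, (hVtrans β hβ v ((hvI.2.trans hβa).le)).1 hvV, hvI⟩
      · exact hVE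
      · obtain ⟨v, hvV, hvI⟩ := hcl E haE
        exact absurd (hVsub v hvV) (not_le_of_gt hvI.1)
    -- cardinality of the levels
    have hreglift : (Cardinal.lift.{1} κ).IsRegular := by
      constructor
      · exact Cardinal.aleph0_le_lift.2 hκreg.aleph0_le
      · rw [← Cardinal.lift_ord, ← Ordinal.lift_cof]
        exact Cardinal.lift_le.2 hκreg.2
    have hcardΓ : Cardinal.mk ↥Γ < Cardinal.lift.{1} κ := by
      calc Cardinal.mk ↥Γ ≤ Cardinal.mk ↥(Set.Iio γ) := Cardinal.mk_le_mk_of_subset hΓsub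
        _ = Cardinal.lift.{1} γ.card := Ordinal.mk_Iio_ordinal γ
        _ < Cardinal.lift.{1} κ := Cardinal.lift_lt.2 (Cardinal.lt_ord.1 hγκ)
    set BS : Set PNode :=
      ((fun τ => b τ) '' Set.Iio θ.ord) ∪ ((fun i => zg i) '' Set.Ioo γ δ) with hBSdef
    have hSeedBS : ∀ b', Seed b' → b' ∈ BS := by
      rintro b' (⟨τ, hτ, rfl⟩ | ⟨i, hγi, hiδ, rfl⟩)
      · exact Set.mem_union_left _ (Set.mem_image_of_mem _ hτ)
      · exact Set.mem_union_right _ (Set.mem_image_of_mem _ ⟨hγi, hiδ⟩)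
    have hcardBS : Cardinal.mk ↥BS < Cardinal.lift.{1} κ := by
      refine lt_of_le_of_lt (Cardinal.mk_union_le _ _)
        (Cardinal.add_lt_of_lt hreglift.aleph0_le ?_ ?_)
      · refine lt_of_le_of_lt Cardinal.mk_image_le ?_
        rw [Ordinal.mk_Iio_ordinal, Cardinal.card_ord]
        exact Cardinal.lift_lt.2 hθκ
      · refine lt_of_le_of_lt Cardinal.mk_image_le ?_
        refine lt_of_le_of_lt (Cardinal.mk_le_mk_of_subset Set.Ioo_subset_Iio_self) ?_
        rw [Ordinal.mk_Iio_ordinal]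
        exact Cardinal.lift_lt.2 (Cardinal.lt_ord.1 hδκ)
    have hcardlev : ∀ a : Ordinal, a ≤ E →
        Cardinal.mk ↥(level qT a) < Cardinal.lift.{1} κ := by
      intro a ha
      rcases eq_or_lt_of_le ha with heq | haE
      · subst heq
        have hsub : level qT E ⊆ ⋃ (β : ↥Γ),
            (fun pr : PNode × PNode => nstar pr.1 pr.2) ''
              ((level (p β.1).T (p β.1).η) ×ˢ BS) := by
          intro y hy
          obtain ⟨β, hβ, x, hxlev, b', hb', rfl⟩ := hnormal y hy
          refine Set.mem_iUnion.2 ⟨⟨β, hβ⟩, ?_⟩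
          exact ⟨(x, b'), ⟨hxlev, hSeedBS b' hb'⟩, rfl⟩
        refine lt_of_le_of_lt (Cardinal.mk_le_mk_of_subset hsub) ?_
        refine lt_of_le_of_lt Cardinal.mk_iUnion_le_sum_mk ?_
        refine Cardinal.sum_lt_of_isRegular hreglift hcardΓ ?_
        intro β
        refine lt_of_le_of_lt Cardinal.mk_image_le ?_
        rw [Cardinal.mk_setProd]
        exact Cardinal.mul_lt_of_lt hreglift.aleph0_le
          ((hcond β.1 β.2).2.2.2.2.2.1 _ le_rfl) hcardBS
      · obtain ⟨β, hβ, hβa⟩ := hexE a haE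
        rw [hlev β hβ a hβa.le]
        exact (hcond β hβ).2.2.2.2.2.1 a hβa.le
    -- assembly
    refine ⟨⟨qT, qf, E⟩, zg,
      ⟨fun t ht => (hqnode t ht).imp (fun a h => ⟨h.1, h.2.2⟩), hqstream, hqhom, hqnormal,
        hlevne, hcardlev, hqpath, hVclosed, fun _ => hVE, hqmutexc⟩,
      hE, ?_, ?_, ?_⟩
    · intro i hγi hiδ
      refine ⟨by rw [hzgdef], ?_⟩
      exact (hSeedq (zg i) (Or.inr ⟨i, hγi, hiδ, rfl⟩)).1
    · intro β hβ
      constructor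
      · refine ⟨hmemE β hβ, ?_, ?_⟩
        · intro t
          constructor
          · intro ht
            obtain ⟨a, ha, hd, -⟩ := hnode β hβ t ht
            exact ⟨hUsubq (hTU β hβ ht), a, ha, hd⟩
          · rintro ⟨ht, a, ha, hd⟩
            exact hUmem t (hqsmalldom t ht a hd (lt_of_le_of_lt ha (hltE β hβ)))
              β hβ a hd ha
        · intro a ha τ hτ
          exact hqfeq a β hβ ha τ hτ
      · ext τ
        constructor
        · rintro ⟨hτ, -⟩
          exact hτ
        · intro hτ
          refine ⟨hτ, Or.inl ?_⟩
          show (p β).f (p β).η τ ⊆ qf E τ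
          rw [hqfE]
          exact hfsubb β hβ τ
    · intro y hy
      have hd : ndom y = Set.Iio E := nodeOf_ndom_eq hy
      constructor
      · intro hyT
        obtain ⟨x, hxU, b', hb', heq⟩ := (hlevE y).1 ⟨hyT, hd⟩
        subst heq
        obtain ⟨β, hβ, hxT⟩ := hUT x hxU
        refine ⟨x, ⟨β, hβ, hxT⟩, ?_⟩
        rcases hb' with ⟨τ, hτ, rfl⟩ | ⟨i, hγi, hiδ, rfl⟩
        · refine Or.inl ⟨τ, hτ, ?_⟩
          show nstar x (b τ) = nstar x (qf E τ)
          rw [hqfE]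
        · exact Or.inr ⟨i, hγi, hiδ, rfl⟩
      · rintro ⟨x, ⟨β, hβ, hxT⟩, (⟨τ, hτ, heq⟩ | ⟨i, hγi, hiδ, heq⟩)⟩
        · have heq2 : y = nstar x (b τ) := by
            rw [heq]
            show nstar x (qf E τ) = _
            rw [hqfE]
          rw [heq2]
          exact htop_mem x (hTU β hβ hxT) _ (hSeedb τ hτ)
        · rw [heq]
          exact htop_mem x (hTU β hβ hxT) _ (Or.inr ⟨i, hγi, hiδ, rfl⟩)
end
end
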